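/- arXiv:2009.04892 — 4 statements merged into one kernel-verified Lean document; each statement's English description precedes it below -/
import Mathlib

section
/- Let F be a t-repeated k-non-signaling function that is permutation folded and (1-ε)-consistent, with k ≥ 2. Then the flattening flat(F): D → Σ, defined by answering a query set S = {q_1,...,q_s} (s ≤ t) via a single query to F on a vector Q^S whose first s entries are q_1,...,q_s, is an (ε, t)-almost-non-signaling function: for any two query sets S, T ⊆ D of size at most t, the marginal distributions of flat(F)_S and flat(F)_T restricted to S ∩ T are ε-close in total variation distance. -/
noncomputable def prob {α : Type*} (p : PMF α) (E : Set α) : ℝ :=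
  (p.toOuterMeasure E).toReal

def restrictAssign {D A : Type*} {S T : Finset D} (h : T ⊆ S)
    (f : {x // x ∈ S} → A) : {x // x ∈ T} → A :=
  fun x => f ⟨x.1, h x.2⟩

noncomputable def marginal {D A : Type*} {S : Finset D} (p : PMF ({x // x ∈ S} → A))
    {T : Finset D} (h : T ⊆ S) : PMF ({x // x ∈ T} → A) :=
  p.map (restrictAssign h)

def IsNonSignaling {D A : Type*} [DecidableEq D] (k : ℕ)
    (F : (S : Finset D) → PMF ({x // x ∈ S} → A)) : Prop :=
  ∀ S T : Finset D, S.card ≤ k → T.card ≤ k →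
    marginal (F S) (Finset.inter_subset_left : S ∩ T ⊆ S) =
    marginal (F T) (Finset.inter_subset_right : S ∩ T ⊆ T)

/-- An `(ε, k)`-almost-non-signaling function: marginals on intersections of query
sets of size at most `k` are `ε`-close in total variation distance. -/
def IsAlmostNonSignaling {D A : Type*} [DecidableEq D] (ε : ℝ) (k : ℕ)
    (F : (S : Finset D) → PMF ({x // x ∈ S} → A)) : Prop :=
  ∀ S T : Finset D, S.card ≤ k → T.card ≤ k →
    ∀ E : Set ({x // x ∈ S ∩ T} → A),
      |prob (marginal (F S) (Finset.inter_subset_left : S ∩ T ⊆ S)) E -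
       prob (marginal (F T) (Finset.inter_subset_right : S ∩ T ⊆ T)) E| ≤ ε

def permQ {t : ℕ} {β : Type*} (π : Equiv.Perm (Fin t)) (Q : Fin t → β) : Fin t → β :=
  fun j => Q (π j)

def IsPermFolded {t : ℕ} {D A : Type*} [DecidableEq D] (k : ℕ)
    (F : (S : Finset (Fin t → D)) → PMF ({Q // Q ∈ S} → (Fin t → A))) : Prop :=
  ∀ (ℓ : ℕ) (Q : Fin ℓ → (Fin t → D)) (π : Fin ℓ → Equiv.Perm (Fin t))
    (b : Fin ℓ → (Fin t → A)), ℓ ≤ k →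
    prob (F (Finset.image Q Finset.univ))
      {f | ∀ i : Fin ℓ, f ⟨Q i, Finset.mem_image_of_mem _ (Finset.mem_univ i)⟩ = b i} =
    prob (F (Finset.image (fun i => permQ (π i) (Q i)) Finset.univ))
      {f | ∀ i : Fin ℓ, f ⟨permQ (π i) (Q i),
          Finset.mem_image_of_mem _ (Finset.mem_univ i)⟩ = permQ (π i) (b i)}

def IsConsistentRep {t : ℕ} {D A : Type*} [DecidableEq D] (ε : ℝ)
    (F : (S : Finset (Fin t → D)) → PMF ({Q // Q ∈ S} → (Fin t → A))) : Prop :=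
  ∀ Q Q' : Fin t → D,
    prob (F {Q, Q'})
      {f | ∀ j : Fin t, Q j = Q' j →
        f ⟨Q, by simp⟩ j = f ⟨Q', by simp⟩ j} ≥ 1 - ε

noncomputable def padVec {D : Type*} [Inhabited D] (t : ℕ) (S : Finset D) : Fin t → D :=
  fun j => if h : (j : ℕ) < S.toList.length then S.toList.get ⟨j, h⟩ else default

/-- The flattening of a `t`-repeated non-signaling function: a query set `S` is answered
via a single query to `F` on a vector whose first `S.card` coordinates enumerate `S`. -/
noncomputable def flatten {D A : Type*} [DecidableEq D] [Inhabited D] [Inhabited A] (t : ℕ)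
    (F : (S : Finset (Fin t → D)) → PMF ({Q // Q ∈ S} → (Fin t → A)))
    (S : Finset D) : PMF ({x // x ∈ S} → A) :=
  (F {padVec t S}).map (fun f x =>
    if h : S.toList.idxOf x.1 < t then
      f ⟨padVec t S, Finset.mem_singleton_self _⟩ ⟨S.toList.idxOf x.1, h⟩
    else default)


section AuxProb

open MeasureTheory

lemma toOM_le_one {α : Type*} (p : PMF α) (s : Set α) : p.toOuterMeasure s ≤ 1 := by
  rw [PMF.toOuterMeasure_apply]
  calc ∑' x, s.indicator p x ≤ ∑' x, p x :=
        ENNReal.tsum_le_tsum fun x => Set.indicator_le_self _ _ x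
    _ = 1 := PMF.tsum_coe p

lemma toOM_ne_top {α : Type*} (p : PMF α) (s : Set α) : p.toOuterMeasure s ≠ ⊤ :=
  ne_top_of_le_ne_top ENNReal.one_ne_top (toOM_le_one p s)

lemma prob_map {α β : Type*} (p : PMF α) (f : α → β) (E : Set β) :
    prob (p.map f) E = prob p (f ⁻¹' E) := by
  unfold prob; rw [PMF.toOuterMeasure_map_apply]

lemma prob_mono {α : Type*} (p : PMF α) {s t : Set α} (h : s ⊆ t) :
    prob p s ≤ prob p t :=
  ENNReal.toReal_mono (toOM_ne_top p t) (measure_mono h)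

lemma prob_union_le {α : Type*} (p : PMF α) (s t : Set α) :
    prob p (s ∪ t) ≤ prob p s + prob p t := by
  have h := measure_union_le (μ := p.toOuterMeasure) s t
  unfold prob
  rw [← ENNReal.toReal_add (toOM_ne_top p s) (toOM_ne_top p t)]
  exact ENNReal.toReal_mono (ENNReal.add_ne_top.2 ⟨toOM_ne_top p s, toOM_ne_top p t⟩) h

lemma prob_add_compl {α : Type*} (p : PMF α) (s : Set α) :
    prob p s + prob p sᶜ = 1 := by
  have h : p.toOuterMeasure s + p.toOuterMeasure sᶜ = 1 := by
    rw [PMF.toOuterMeasure_apply, PMF.toOuterMeasure_apply, ← ENNReal.tsum_add,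
      ← PMF.tsum_coe p]
    congr 1
    funext x
    by_cases hx : x ∈ s <;>
      simp [Set.indicator_of_mem, Set.indicator_of_notMem, hx]
  unfold prob
  rw [← ENNReal.toReal_add (toOM_ne_top p s) (toOM_ne_top p sᶜ), h, ENNReal.toReal_one]

lemma abs_prob_sub_le {α : Type*} (p : PMF α) {A B G : Set α} {ε : ℝ}
    (hAB : A ∩ G = B ∩ G) (hG : 1 - ε ≤ prob p G) :
    |prob p A - prob p B| ≤ ε := by
  have hGc : prob p Gᶜ ≤ ε := by have := prob_add_compl p G; linarith
  have key : ∀ X Y : Set α, X ∩ G = Y ∩ G → prob p X - prob p Y ≤ ε := by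
    intro X Y h
    have h1 : prob p X ≤ prob p (Y ∩ G) + prob p Gᶜ := by
      calc prob p X ≤ prob p ((X ∩ G) ∪ Gᶜ) := by
            refine prob_mono p fun x hx => ?_
            by_cases hg : x ∈ G
            exacts [Or.inl ⟨hx, hg⟩, Or.inr hg]
        _ ≤ prob p (X ∩ G) + prob p Gᶜ := prob_union_le _ _ _
        _ = prob p (Y ∩ G) + prob p Gᶜ := by rw [h]
    have h2 : prob p (Y ∩ G) ≤ prob p Y := prob_mono p Set.inter_subset_left
    linarith
  rw [abs_sub_le_iff]
  exact ⟨key _ _ hAB, key _ _ hAB.symm⟩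

lemma exists_perm_comp {α β : Type*} [Fintype α] [Fintype β] [DecidableEq β]
    {f g : α → β} (hf : Function.Injective f) (hg : Function.Injective g) :
    ∃ σ : Equiv.Perm β, ∀ a, σ (f a) = g a := by
  classical
  have hcard : Fintype.card ((Set.range f)ᶜ : Set β) = Fintype.card ((Set.range g)ᶜ : Set β) := by
    rw [Fintype.card_compl_set, Fintype.card_compl_set,
      Set.card_range_of_injective hf, Set.card_range_of_injective hg]
  refine ⟨(Equiv.Set.sumCompl (Set.range f)).symm.trans
    ((Equiv.sumCongr ((Equiv.ofInjective f hf).symm.trans (Equiv.ofInjective g hg))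
      (Fintype.equivOfCardEq hcard)).trans
      (Equiv.Set.sumCompl (Set.range g))), fun a => ?_⟩
  simp only [Equiv.trans_apply]
  rw [Equiv.Set.sumCompl_symm_apply_of_mem (Set.mem_range_self a)]
  have h1 : (Equiv.ofInjective f hf).symm ⟨f a, Set.mem_range_self a⟩ = a := by
    rw [Equiv.symm_apply_eq, Equiv.ofInjective_apply]
  simp [h1, Equiv.ofInjective_apply]

lemma padVec_indexOf {D : Type*} [Inhabited D] [DecidableEq D] {t : ℕ} {S : Finset D} {x : D}
    (hx : x ∈ S) (h : S.toList.idxOf x < t) :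
    padVec t S ⟨S.toList.idxOf x, h⟩ = x := by
  have hl : S.toList.idxOf x < S.toList.length :=
    List.idxOf_lt_length_iff.2 (Finset.mem_toList.2 hx)
  simp only [padVec]
  rw [dif_pos hl]
  simp [List.get_eq_getElem, List.getElem_idxOf]

lemma F_congr {γ B : Type*} (F : (S : Finset γ) → PMF ({x // x ∈ S} → B))
    {s₁ s₂ : Finset γ} (h : s₁ = s₂) :
    F s₂ = (F s₁).map (fun f x => f ⟨x.1, h ▸ x.2⟩) := by
  subst h
  exact (PMF.map_id (F s₁)).symm

instance uniqSingle {γ : Type*} [DecidableEq γ] (v : γ) :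
    Unique {x // x ∈ ({v} : Finset γ)} :=
  ⟨⟨⟨v, Finset.mem_singleton_self v⟩⟩, by
    rintro ⟨x, hx⟩
    ext
    simpa using hx⟩

lemma singleton_point {γ B : Type*} [DecidableEq γ]
    (F : (S : Finset γ) → PMF ({x // x ∈ S} → B))
    {s : Finset γ} {v : γ} (h : s = {v}) (Qf : Fin 1 → γ) (hQf : ∀ i, Qf i = v)
    (prf : ∀ i, Qf i ∈ s) (bf : Fin 1 → B) :
    prob (F s) {f | ∀ i : Fin 1, f ⟨Qf i, prf i⟩ = bf i}
      = ((F {v}) (fun _ => bf 0)).toReal := by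
  have h2 : prob (F {v}) {(fun _ => bf 0 : {x // x ∈ ({v} : Finset γ)} → B)}
      = ((F {v}) (fun _ => bf 0)).toReal := by
    unfold prob; rw [PMF.toOuterMeasure_apply_singleton]
  rw [← h2, F_congr F h, prob_map]
  congr 1
  ext f
  simp only [Set.mem_setOf_eq, Set.mem_preimage, Set.mem_singleton_iff]
  constructor
  · intro hf
    funext x
    have hx1 : x.1 = v := Finset.mem_singleton.1 x.2
    show f ⟨x.1, h ▸ x.2⟩ = bf 0
    have hxe : (⟨x.1, h ▸ x.2⟩ : {y // y ∈ s}) = ⟨Qf 0, prf 0⟩ :=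
      Subtype.ext (hx1.trans (hQf 0).symm)
    rw [hxe]
    exact hf 0
  · intro hf i
    have h1 : f ⟨v, h ▸ Finset.mem_singleton_self v⟩ = bf 0 :=
      congrFun hf ⟨v, Finset.mem_singleton_self v⟩
    calc f ⟨Qf i, prf i⟩ = f ⟨v, h ▸ Finset.mem_singleton_self v⟩ :=
          congrArg f (Subtype.ext (hQf i))
      _ = bf 0 := h1
      _ = bf i := congrArg bf (Subsingleton.elim 0 i)

lemma fold_point {t k : ℕ} {D A : Type*} [DecidableEq D]
    (F : (S : Finset (Fin t → D)) → PMF ({Q // Q ∈ S} → (Fin t → A)))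
    (hfold : IsPermFolded k F) (hk1 : 1 ≤ k) (R : Fin t → D) (σ : Equiv.Perm (Fin t))
    (b : Fin t → A) :
    (F {R}) (fun _ => b) = (F {permQ σ R}) (fun _ => permQ σ b) := by
  have h := hfold 1 (fun _ => R) (fun _ => σ) (fun _ => b) hk1
  have h1 : Finset.image (fun _ : Fin 1 => R) Finset.univ = ({R} : Finset _) :=
    Finset.image_const Finset.univ_nonempty R
  have h2 : Finset.image (fun _ : Fin 1 => permQ σ R) Finset.univ
      = ({permQ σ R} : Finset _) :=
    Finset.image_const Finset.univ_nonempty _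
  have e1 := singleton_point F h1 (fun _ => R) (fun _ => rfl)
    (fun i => Finset.mem_image_of_mem _ (Finset.mem_univ i)) (fun _ => b)
  have e2 := singleton_point F h2 (fun _ => permQ σ R) (fun _ => rfl)
    (fun i => Finset.mem_image_of_mem _ (Finset.mem_univ i)) (fun _ => permQ σ b)
  have h3 := (e1.symm.trans h).trans e2
  exact (ENNReal.toReal_eq_toReal_iff' (PMF.apply_ne_top _ _) (PMF.apply_ne_top _ _)).1 h3

lemma prob_eval {γ B : Type*} [DecidableEq γ] (v w : γ)
    (p : PMF ({x // x ∈ ({v} : Finset γ)} → B)) (q : PMF ({x // x ∈ ({w} : Finset γ)} → B))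
    (e : Equiv.Perm B)
    (hpt : ∀ b : B, p (fun _ => b) = q (fun _ => e b))
    (P P' : B → Prop) (hPP : ∀ b, P b ↔ P' (e b)) :
    prob p {f | P (f ⟨v, Finset.mem_singleton_self v⟩)} =
    prob q {g | P' (g ⟨w, Finset.mem_singleton_self w⟩)} := by
  classical
  have key : ∀ (u : γ) (r : PMF ({x // x ∈ ({u} : Finset γ)} → B)) (Pr : B → Prop),
      r.toOuterMeasure {f | Pr (f ⟨u, Finset.mem_singleton_self u⟩)}
        = ∑' b : B, Set.indicator {c | Pr c} (fun c => r (fun _ => c)) b := by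
    intro u r Pr
    rw [PMF.toOuterMeasure_apply]
    refine Eq.trans
      (Equiv.tsum_eq (Equiv.funUnique {x // x ∈ ({u} : Finset γ)} B).symm _).symm
      (tsum_congr fun b => ?_)
    by_cases hb : Pr b
    · rw [Set.indicator_of_mem (show b ∈ {c | Pr c} from hb)]
      rw [Set.indicator_of_mem
        (show (Equiv.funUnique {x // x ∈ ({u} : Finset γ)} B).symm b
          ∈ {f | Pr (f ⟨u, Finset.mem_singleton_self u⟩)} from hb)]
      rfl
    · rw [Set.indicator_of_notMem (show b ∉ {c | Pr c} from hb)]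
      rw [Set.indicator_of_notMem
        (show (Equiv.funUnique {x // x ∈ ({u} : Finset γ)} B).symm b
          ∉ {f | Pr (f ⟨u, Finset.mem_singleton_self u⟩)} from hb)]
  unfold prob
  rw [key v p P, key w q P']
  congr 1
  refine Eq.trans (tsum_congr fun b => ?_)
    (Equiv.tsum_eq e (fun b => Set.indicator {c | P' c} (fun c => q (fun _ => c)) b))
  by_cases hb : P b
  · rw [Set.indicator_of_mem (show b ∈ {c | P c} from hb),
      Set.indicator_of_mem (show e b ∈ {c | P' c} from (hPP b).1 hb)]
    exact hpt b
  · rw [Set.indicator_of_notMem (show b ∉ {c | P c} from hb),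
      Set.indicator_of_notMem
        (show e b ∉ {c | P' c} from fun hc => hb ((hPP b).2 hc))]

lemma prob_ns_step {γ B : Type*} [DecidableEq γ] {k : ℕ}
    (F : (S : Finset γ) → PMF ({x // x ∈ S} → B))
    (hns : IsNonSignaling k F) {V W : Finset γ} (hV : V.card ≤ k) (hW : W.card ≤ k)
    {v : γ} (hvV : v ∈ V) (hvW : v ∈ W) (P : B → Prop) :
    prob (F V) {f | P (f ⟨v, hvV⟩)} = prob (F W) {f | P (f ⟨v, hvW⟩)} := by
  have hvI : v ∈ V ∩ W := Finset.mem_inter.2 ⟨hvV, hvW⟩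
  have h := congrArg (fun r => prob r {g : {x // x ∈ V ∩ W} → B | P (g ⟨v, hvI⟩)})
    (hns V W hV hW)
  exact ((prob_map (F V) (restrictAssign Finset.inter_subset_left) _).symm.trans h).trans
    (prob_map (F W) (restrictAssign Finset.inter_subset_right) _)

end AuxProb

/-- the flattening of a permutation-folded `(1-ε)`-consistent `t`-repeated
`k`-non-signaling function (`k ≥ 2`) is an `(ε, t)`-almost-non-signaling function. -/
theorem flatten_almost_nonsignaling {t k : ℕ} {D A : Type*}
    [DecidableEq D] [Inhabited D] [Inhabited A]
    (F : (S : Finset (Fin t → D)) → PMF ({Q // Q ∈ S} → (Fin t → A)))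
    (hk : 2 ≤ k)
    (hns : IsNonSignaling k F)
    (hfold : IsPermFolded k F)
    (ε : ℝ)
    (hcons : IsConsistentRep ε F) :
    IsAlmostNonSignaling ε t (flatten t F) := by
  classical
  intro S T hS hT E
  have hidxS : ∀ x : {x // x ∈ S ∩ T}, S.toList.idxOf x.1 < t := by
    intro x
    have hxS : x.1 ∈ S := Finset.mem_of_mem_inter_left x.2
    have h1 : S.toList.idxOf x.1 < S.toList.length :=
      List.idxOf_lt_length_iff.2 (Finset.mem_toList.2 hxS)
    rw [Finset.length_toList] at h1
    exact lt_of_lt_of_le h1 hS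
  have hidxT : ∀ x : {x // x ∈ S ∩ T}, T.toList.idxOf x.1 < t := by
    intro x
    have hxT : x.1 ∈ T := Finset.mem_of_mem_inter_right x.2
    have h1 : T.toList.idxOf x.1 < T.toList.length :=
      List.idxOf_lt_length_iff.2 (Finset.mem_toList.2 hxT)
    rw [Finset.length_toList] at h1
    exact lt_of_lt_of_le h1 hT
  let idxS : {x // x ∈ S ∩ T} → Fin t := fun x => ⟨S.toList.idxOf x.1, hidxS x⟩
  let idxT : {x // x ∈ S ∩ T} → Fin t := fun x => ⟨T.toList.idxOf x.1, hidxT x⟩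
  have hQ : ∀ x, padVec t S (idxS x) = x.1 := fun x =>
    padVec_indexOf (Finset.mem_of_mem_inter_left x.2) (hidxS x)
  have hR : ∀ x, padVec t T (idxT x) = x.1 := fun x =>
    padVec_indexOf (Finset.mem_of_mem_inter_right x.2) (hidxT x)
  have hinjS : Function.Injective idxS := by
    intro x y hxy
    apply Subtype.ext
    rw [← hQ x, ← hQ y, hxy]
  have hinjT : Function.Injective idxT := by
    intro x y hxy
    apply Subtype.ext
    rw [← hR x, ← hR y, hxy]
  obtain ⟨σ, hσ⟩ := exists_perm_comp hinjS hinjT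
  let Q'' : Fin t → D := permQ σ (padVec t T)
  have hQ'' : ∀ x, Q'' (idxS x) = x.1 := by
    intro x
    show padVec t T (σ (idxS x)) = x.1
    rw [hσ x]
    exact hR x
  let P : (Fin t → A) → Prop := fun u => (fun x : {x // x ∈ S ∩ T} => u (idxS x)) ∈ E
  let PT : (Fin t → A) → Prop := fun u => (fun x : {x // x ∈ S ∩ T} => u (idxT x)) ∈ E
  have hQV : padVec t S ∈ ({padVec t S, Q''} : Finset (Fin t → D)) :=
    Finset.mem_insert_self _ _
  have hQ''V : Q'' ∈ ({padVec t S, Q''} : Finset (Fin t → D)) := by simp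
  have hVcard : ({padVec t S, Q''} : Finset (Fin t → D)).card ≤ k :=
    le_trans (Finset.card_insert_le _ _) (by rw [Finset.card_singleton]; exact hk)
  have h1card : ∀ v : Fin t → D, ({v} : Finset (Fin t → D)).card ≤ k := fun v => by
    rw [Finset.card_singleton]; omega
  have flatS : prob (marginal (flatten t F S) (Finset.inter_subset_left : S ∩ T ⊆ S)) E
      = prob (F {padVec t S})
          {f | P (f ⟨padVec t S, Finset.mem_singleton_self _⟩)} := by
    have e1 : prob (marginal (flatten t F S) (Finset.inter_subset_left : S ∩ T ⊆ S)) E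
        = prob (F {padVec t S})
            ((fun (f : {x // x ∈ ({padVec t S} : Finset (Fin t → D))} → (Fin t → A))
                (x : {x // x ∈ S}) =>
              if h : S.toList.idxOf x.1 < t then
                f ⟨padVec t S, Finset.mem_singleton_self _⟩ ⟨S.toList.idxOf x.1, h⟩
              else default)
              ⁻¹' (restrictAssign (Finset.inter_subset_left : S ∩ T ⊆ S) ⁻¹' E)) :=
      (prob_map _ _ _).trans (prob_map _ _ _)
    rw [e1]
    congr 1
    ext f
    simp only [Set.mem_preimage, Set.mem_setOf_eq]
    have hfe : restrictAssign (Finset.inter_subset_left : S ∩ T ⊆ S)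
        (fun (x : {x // x ∈ S}) =>
          if h : S.toList.idxOf x.1 < t then
            f ⟨padVec t S, Finset.mem_singleton_self _⟩ ⟨S.toList.idxOf x.1, h⟩
          else default)
        = fun x : {x // x ∈ S ∩ T} =>
            f ⟨padVec t S, Finset.mem_singleton_self _⟩ (idxS x) := by
      funext x
      show (if h : S.toList.idxOf x.1 < t then
          f ⟨padVec t S, Finset.mem_singleton_self _⟩ ⟨S.toList.idxOf x.1, h⟩
        else default) = _
      rw [dif_pos (hidxS x)]
    rw [hfe]
  have flatT : prob (marginal (flatten t F T) (Finset.inter_subset_right : S ∩ T ⊆ T)) E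
      = prob (F {padVec t T})
          {f | PT (f ⟨padVec t T, Finset.mem_singleton_self _⟩)} := by
    have e1 : prob (marginal (flatten t F T) (Finset.inter_subset_right : S ∩ T ⊆ T)) E
        = prob (F {padVec t T})
            ((fun (f : {x // x ∈ ({padVec t T} : Finset (Fin t → D))} → (Fin t → A))
                (x : {x // x ∈ T}) =>
              if h : T.toList.idxOf x.1 < t then
                f ⟨padVec t T, Finset.mem_singleton_self _⟩ ⟨T.toList.idxOf x.1, h⟩
              else default)
              ⁻¹' (restrictAssign (Finset.inter_subset_right : S ∩ T ⊆ T) ⁻¹' E)) :=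
      (prob_map _ _ _).trans (prob_map _ _ _)
    rw [e1]
    congr 1
    ext f
    simp only [Set.mem_preimage, Set.mem_setOf_eq]
    have hfe : restrictAssign (Finset.inter_subset_right : S ∩ T ⊆ T)
        (fun (x : {x // x ∈ T}) =>
          if h : T.toList.idxOf x.1 < t then
            f ⟨padVec t T, Finset.mem_singleton_self _⟩ ⟨T.toList.idxOf x.1, h⟩
          else default)
        = fun x : {x // x ∈ S ∩ T} =>
            f ⟨padVec t T, Finset.mem_singleton_self _⟩ (idxT x) := by
      funext x
      show (if h : T.toList.idxOf x.1 < t then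
          f ⟨padVec t T, Finset.mem_singleton_self _⟩ ⟨T.toList.idxOf x.1, h⟩
        else default) = _
      rw [dif_pos (hidxT x)]
    rw [hfe]
  have nsS : prob (F {padVec t S}) {f | P (f ⟨padVec t S, Finset.mem_singleton_self _⟩)}
      = prob (F {padVec t S, Q''}) {f | P (f ⟨padVec t S, hQV⟩)} :=
    (prob_ns_step F hns hVcard (h1card _) hQV (Finset.mem_singleton_self _) P).symm
  have nsT : prob (F {Q''}) {f | P (f ⟨Q'', Finset.mem_singleton_self _⟩)}
      = prob (F {padVec t S, Q''}) {f | P (f ⟨Q'', hQ''V⟩)} :=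
    (prob_ns_step F hns hVcard (h1card _) hQ''V (Finset.mem_singleton_self _) P).symm
  have foldT : prob (F {padVec t T})
        {f | PT (f ⟨padVec t T, Finset.mem_singleton_self _⟩)}
      = prob (F {Q''}) {g | P (g ⟨Q'', Finset.mem_singleton_self _⟩)} := by
    refine prob_eval _ _ _ _ (Equiv.arrowCongr σ.symm (Equiv.refl A))
      (fun b => fold_point F hfold (le_trans one_le_two hk) (padVec t T) σ b) PT P ?_
    intro b
    have hfeq : (fun x : {x // x ∈ S ∩ T} => b (σ (idxS x)))
        = fun x : {x // x ∈ S ∩ T} => b (idxT x) :=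
      funext fun x => by rw [hσ x]
    show ((fun x : {x // x ∈ S ∩ T} => b (idxT x)) ∈ E)
        ↔ ((fun x : {x // x ∈ S ∩ T} => b (σ (idxS x))) ∈ E)
    rw [hfeq]
  have hGs : 1 - ε ≤ prob (F {padVec t S, Q''})
      {f | ∀ j : Fin t, padVec t S j = Q'' j →
        f ⟨padVec t S, hQV⟩ j = f ⟨Q'', hQ''V⟩ j} := hcons (padVec t S) Q''
  have hABG : {f : {x // x ∈ ({padVec t S, Q''} : Finset (Fin t → D))} → (Fin t → A) |
        P (f ⟨padVec t S, hQV⟩)}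
      ∩ {f | ∀ j : Fin t, padVec t S j = Q'' j →
          f ⟨padVec t S, hQV⟩ j = f ⟨Q'', hQ''V⟩ j}
      = {f | P (f ⟨Q'', hQ''V⟩)}
      ∩ {f | ∀ j : Fin t, padVec t S j = Q'' j →
          f ⟨padVec t S, hQV⟩ j = f ⟨Q'', hQ''V⟩ j} := by
    ext f
    simp only [Set.mem_inter_iff, Set.mem_setOf_eq]
    constructor
    · rintro ⟨hA, hg⟩
      refine ⟨?_, hg⟩
      have hfeq : (fun x : {x // x ∈ S ∩ T} => f ⟨Q'', hQ''V⟩ (idxS x))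
          = fun x => f ⟨padVec t S, hQV⟩ (idxS x) :=
        funext fun x => (hg (idxS x) ((hQ x).trans (hQ'' x).symm)).symm
      exact Set.mem_of_eq_of_mem hfeq hA
    · rintro ⟨hA, hg⟩
      refine ⟨?_, hg⟩
      have hfeq : (fun x : {x // x ∈ S ∩ T} => f ⟨padVec t S, hQV⟩ (idxS x))
          = fun x => f ⟨Q'', hQ''V⟩ (idxS x) :=
        funext fun x => hg (idxS x) ((hQ x).trans (hQ'' x).symm)
      exact Set.mem_of_eq_of_mem hfeq hA
  rw [flatS, nsS, flatT, foldT, nsT]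
  exact abs_prob_sub_le (F {padVec t S, Q''}) hABG hGs
end

section
/- Let F be a t-repeated k-non-signaling function that is permutation folded and (1-ε)-consistent with k ≥ 2. Fix a query Q = (w_1,...,w_t) ∈ D^t, a query set S ⊆ D of size s ≤ t, and an index ℓ ≤ t such that w_1,...,w_ℓ are distinct and each w_j ∈ S for j ∈ [ℓ]. Then the distribution of (flat(F)_S(w_1),...,flat(F)_S(w_ℓ)) and the distribution of (F(Q)_1,...,F(Q)_ℓ) are ε-close in total variation distance. -/
namespace FlattenAux

lemma toOM_le_one {α : Type*} (p : PMF α) (E : Set α) : p.toOuterMeasure E ≤ 1 := by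
  rw [PMF.toOuterMeasure_apply]
  calc ∑' x, E.indicator p x ≤ ∑' x, p x :=
        ENNReal.tsum_le_tsum fun x => Set.indicator_le_self E p x
    _ = 1 := p.tsum_coe

lemma toOM_ne_top {α : Type*} (p : PMF α) (E : Set α) : p.toOuterMeasure E ≠ ⊤ :=
  ne_top_of_le_ne_top ENNReal.one_ne_top (toOM_le_one p E)

lemma prob_map {α β : Type*} (p : PMF α) (g : α → β) (E : Set β) :
    prob (p.map g) E = prob p (g ⁻¹' E) := by
  simp [prob, PMF.toOuterMeasure_map_apply]

lemma prob_singleton {α : Type*} (q : PMF α) (b : α) : prob q {b} = (q b).toReal := by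
  rw [prob, PMF.toOuterMeasure_apply_singleton]

lemma prob_compl {α : Type*} (p : PMF α) (C : Set α) : prob p Cᶜ = 1 - prob p C := by
  have h : p.toOuterMeasure C + p.toOuterMeasure Cᶜ = 1 := by
    rw [PMF.toOuterMeasure_apply, PMF.toOuterMeasure_apply, ← ENNReal.tsum_add, ← p.tsum_coe]
    exact tsum_congr fun x => by by_cases hx : x ∈ C <;> simp [Set.indicator, hx]
  have := congrArg ENNReal.toReal h
  rw [ENNReal.toReal_add (toOM_ne_top p C) (toOM_ne_top p Cᶜ), ENNReal.toReal_one] at this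
  simp only [prob]
  linarith

lemma tv_bound {α β : Type*} (p : PMF α) (X Y : α → β) (C : Set α) (ε : ℝ)
    (hXY : ∀ a ∈ C, X a = Y a) (hC : 1 - ε ≤ prob p C) (E : Set β) :
    |prob (p.map X) E - prob (p.map Y) E| ≤ ε := by
  have hc : prob p Cᶜ ≤ ε := by rw [prob_compl]; linarith
  have key : ∀ U V : α → β, (∀ a ∈ C, U a = V a) →
      prob p (U ⁻¹' E) ≤ prob p (V ⁻¹' E) + prob p Cᶜ := by
    intro U V h
    have hsub : U ⁻¹' E ⊆ V ⁻¹' E ∪ Cᶜ := by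
      intro a ha
      by_cases hac : a ∈ C
      · exact Or.inl (by rwa [Set.mem_preimage, ← h a hac])
      · exact Or.inr hac
    have h1 : p.toOuterMeasure (U ⁻¹' E) ≤ p.toOuterMeasure (V ⁻¹' E) + p.toOuterMeasure Cᶜ :=
      le_trans (p.toOuterMeasure.mono hsub) (MeasureTheory.measure_union_le _ _)
    have h2 := ENNReal.toReal_mono (by
      exact ENNReal.add_ne_top.mpr ⟨toOM_ne_top p _, toOM_ne_top p _⟩) h1
    rwa [ENNReal.toReal_add (toOM_ne_top p _) (toOM_ne_top p _)] at h2
  rw [prob_map, prob_map]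
  have h1 := key X Y hXY
  have h2 := key Y X fun a ha => (hXY a ha).symm
  rw [abs_le]
  constructor <;> linarith

lemma exists_perm_comp {β : Type*} [DecidableEq β] :
    ∀ {n : ℕ} {f g : Fin n → β}, Function.Injective f → Function.Injective g →
      ∃ π : Equiv.Perm β, ∀ i, π (f i) = g i := by
  intro n
  induction n with
  | zero => exact fun _ _ => ⟨1, fun i => i.elim0⟩
  | succ m ih =>
    intro f g hf hg
    obtain ⟨π, hπ⟩ := ih (f := f ∘ Fin.castSucc) (g := g ∘ Fin.castSucc)
      (hf.comp (Fin.castSucc_injective m)) (hg.comp (Fin.castSucc_injective m))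
    refine ⟨π.trans (Equiv.swap (π (f (Fin.last m))) (g (Fin.last m))), fun i => ?_⟩
    refine Fin.lastCases ?_ (fun j => ?_) i
    · simp [Equiv.swap_apply_left]
    · have h1 : π (f (Fin.castSucc j)) = g (Fin.castSucc j) := hπ j
      have h2 : g (Fin.castSucc j) ≠ π (f (Fin.last m)) := by
        intro hcon
        rw [← h1] at hcon
        exact absurd (hf (π.injective hcon)) (by simp [Fin.ext_iff]; omega)
      have h3 : g (Fin.castSucc j) ≠ g (Fin.last m) := by
        intro hcon
        exact absurd (hg hcon) (by simp [Fin.ext_iff]; omega)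
      simp [h1, Equiv.swap_apply_of_ne_of_ne h2 h3]

lemma eval_transport {β γ : Type*} [DecidableEq β] (F : (S : Finset β) → PMF ({x // x ∈ S} → γ))
    {S₁ S₂ : Finset β} (h : S₁ = S₂) (q : β) (h₁ : q ∈ S₁) (h₂ : q ∈ S₂) (G : Set γ) :
    prob (F S₁) {f | f ⟨q, h₁⟩ ∈ G} = prob (F S₂) {f | f ⟨q, h₂⟩ ∈ G} := by
  subst h; rfl

end FlattenAux


/-- for a permutation-folded `(1-ε)`-consistent `t`-repeated
`k`-non-signaling function `F` (`k ≥ 2`), a query `Q = (w₁, …, w_t)`, a query set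
`S` of size `≤ t`, and `ℓ ≤ t` with `w₁, …, w_ℓ` distinct and contained in `S`, the
distribution of `(flat(F)_S(w₁), …, flat(F)_S(w_ℓ))` and the distribution of
`(F(Q)₁, …, F(Q)_ℓ)` are `ε`-close in total variation distance. -/
theorem flatten_close_to_repeated {t k : ℕ} {D A : Type*}
    [DecidableEq D] [Inhabited D] [Inhabited A]
    (F : (S : Finset (Fin t → D)) → PMF ({Q // Q ∈ S} → (Fin t → A)))
    (hk : 2 ≤ k)
    (hns : IsNonSignaling k F)
    (hfold : IsPermFolded k F)
    (ε : ℝ)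
    (hcons : IsConsistentRep ε F)
    (Q : Fin t → D) (S : Finset D) (hS : S.card ≤ t)
    (ℓ : ℕ) (hℓ : ℓ ≤ t)
    (hinj : ∀ i j : Fin ℓ, Q (Fin.castLE hℓ i) = Q (Fin.castLE hℓ j) → i = j)
    (hmem : ∀ i : Fin ℓ, Q (Fin.castLE hℓ i) ∈ S) :
    ∀ E : Set (Fin ℓ → A),
      |prob ((flatten t F S).map (fun f (i : Fin ℓ) =>
          f ⟨Q (Fin.castLE hℓ i), hmem i⟩)) E -
       prob ((F {Q}).map (fun f (i : Fin ℓ) =>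
          f ⟨Q, Finset.mem_singleton_self _⟩ (Fin.castLE hℓ i))) E| ≤ ε := by
  classical
  intro E
  have hlen : S.toList.length = S.card := Finset.length_toList S
  have hidxlen : ∀ i : Fin ℓ, S.toList.idxOf (Q (Fin.castLE hℓ i)) < S.toList.length :=
    fun i => List.idxOf_lt_length_iff.mpr (Finset.mem_toList.mpr (hmem i))
  have hidxlt : ∀ i : Fin ℓ, S.toList.idxOf (Q (Fin.castLE hℓ i)) < t :=
    fun i => lt_of_lt_of_le (hlen ▸ hidxlen i) hS
  set P : Fin t → D := padVec t S with hPdef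
  let idx : Fin ℓ → Fin t := fun i => ⟨S.toList.idxOf (Q (Fin.castLE hℓ i)), hidxlt i⟩
  have hPidx : ∀ i, P (idx i) = Q (Fin.castLE hℓ i) := by
    intro i
    show padVec t S (idx i) = _
    rw [padVec, dif_pos (hidxlen i)]
    exact List.idxOf_get (hidxlen i)
  have hidxinj : Function.Injective idx := by
    intro i j hij
    apply hinj
    rw [← hPidx i, ← hPidx j, hij]
  obtain ⟨π, hπ⟩ := FlattenAux.exists_perm_comp
    (f := fun i : Fin ℓ => Fin.castLE hℓ i) (g := idx)
    (fun a b h => by simpa [Fin.ext_iff] using h) hidxinj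
  set P' : Fin t → D := permQ π P with hP'def
  have hP'Q : ∀ i : Fin ℓ, P' (Fin.castLE hℓ i) = Q (Fin.castLE hℓ i) := by
    intro i
    show P (π (Fin.castLE hℓ i)) = _
    rw [hπ i, hPidx i]
  -- Step 1 : flatten side as a map of F {P}
  have hL1 : (flatten t F S).map (fun f (i : Fin ℓ) => f ⟨Q (Fin.castLE hℓ i), hmem i⟩)
      = (F {P}).map (fun f (i : Fin ℓ) =>
          f ⟨P, Finset.mem_singleton_self _⟩ (idx i)) := by
    rw [flatten, PMF.map_comp]
    congr 1
    funext f
    funext i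
    show (if h : S.toList.idxOf (Q (Fin.castLE hℓ i)) < t then
        f ⟨padVec t S, Finset.mem_singleton_self _⟩ ⟨S.toList.idxOf (Q (Fin.castLE hℓ i)), h⟩
      else default) = _
    rw [dif_pos (hidxlt i)]
  -- Step 2 : permutation folding
  have hfold1 : ∀ b : Fin t → A,
      prob ((F {P}).map (fun f => f ⟨P, Finset.mem_singleton_self _⟩)) {b}
      = prob ((F {P'}).map (fun f => f ⟨P', Finset.mem_singleton_self _⟩)) {b ∘ ⇑π} := by
    intro b
    have h := hfold 1 (fun _ => P) (fun _ => π) (fun _ => b) (le_trans one_le_two hk)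
    have hS₁ : ({P} : Finset (Fin t → D))
        = Finset.image (fun _ : Fin 1 => P) Finset.univ := by simp
    have hS₂ : ({P'} : Finset (Fin t → D))
        = Finset.image (fun i : Fin 1 => permQ ((fun _ : Fin 1 => π) i) ((fun _ : Fin 1 => P) i))
            Finset.univ := by simp [hP'def]
    rw [FlattenAux.prob_map, FlattenAux.prob_map]
    have e₁ : (fun f : {x // x ∈ ({P} : Finset (Fin t → D))} → (Fin t → A) =>
        f ⟨P, Finset.mem_singleton_self _⟩) ⁻¹' {b}
        = {f | f ⟨P, Finset.mem_singleton_self _⟩ ∈ ({b} : Set (Fin t → A))} := rfl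
    have e₂ : (fun f : {x // x ∈ ({P'} : Finset (Fin t → D))} → (Fin t → A) =>
        f ⟨P', Finset.mem_singleton_self _⟩) ⁻¹' {b ∘ ⇑π}
        = {f | f ⟨P', Finset.mem_singleton_self _⟩ ∈ ({b ∘ ⇑π} : Set (Fin t → A))} := rfl
    rw [e₁, e₂, FlattenAux.eval_transport F hS₁ P (Finset.mem_singleton_self _)
        (hS₁ ▸ Finset.mem_singleton_self _),
      FlattenAux.eval_transport F hS₂ P' (Finset.mem_singleton_self _)
        (hS₂ ▸ Finset.mem_singleton_self _)]
    convert h using 2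
    · ext f
      simp only [Set.mem_setOf_eq, Set.mem_singleton_iff]
      constructor
      · intro hb i
        exact hb
      · intro hb
        exact hb 0
    · ext f
      simp only [Set.mem_setOf_eq, Set.mem_singleton_iff]
      constructor
      · intro hb i
        exact hb
      · intro hb
        exact hb 0
  have hPMF : (F {P}).map (fun f => f ⟨P, Finset.mem_singleton_self _⟩)
      = ((F {P'}).map (fun f => f ⟨P', Finset.mem_singleton_self _⟩)).map
          (fun g => g ∘ ⇑π.symm) := by
    apply PMF.ext
    intro b
    have h2 : (((F {P'}).map (fun f => f ⟨P', Finset.mem_singleton_self _⟩)).map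
        (fun g => g ∘ ⇑π.symm)) b
        = ((F {P'}).map (fun f => f ⟨P', Finset.mem_singleton_self _⟩)) (b ∘ ⇑π) := by
      rw [PMF.map_apply]
      refine tsum_eq_single (b ∘ ⇑π) ?_ |>.trans ?_
      · intro g hg
        rw [if_neg]
        intro hcon
        apply hg
        funext j
        have := congrFun hcon (π j)
        simpa using this.symm
      · rw [if_pos]
        funext j
        simp
    rw [h2]
    have h1 := hfold1 b
    rw [FlattenAux.prob_singleton, FlattenAux.prob_singleton] at h1
    exact (ENNReal.toReal_eq_toReal_iff' (PMF.apply_ne_top _ _) (PMF.apply_ne_top _ _)).mp h1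
  have hL2 : (F {P}).map (fun f (i : Fin ℓ) =>
        f ⟨P, Finset.mem_singleton_self _⟩ (idx i))
      = (F {P'}).map (fun f (i : Fin ℓ) =>
        f ⟨P', Finset.mem_singleton_self _⟩ (Fin.castLE hℓ i)) := by
    have hcomp : (fun f : {x // x ∈ ({P} : Finset (Fin t → D))} → (Fin t → A) =>
        fun i : Fin ℓ => f ⟨P, Finset.mem_singleton_self _⟩ (idx i))
        = (fun (b : Fin t → A) (i : Fin ℓ) => b (idx i)) ∘
          (fun f => f ⟨P, Finset.mem_singleton_self _⟩) := rfl
    rw [hcomp, ← PMF.map_comp, hPMF, PMF.map_comp, PMF.map_comp]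
    congr 1
    funext f
    funext i
    show f ⟨P', Finset.mem_singleton_self _⟩ (π.symm (idx i)) = _
    rw [← hπ i, Equiv.symm_apply_apply]
  -- Step 3 : non-signaling + consistency
  have hmemP' : P' ∈ ({P', Q} : Finset (Fin t → D)) := Finset.mem_insert_self _ _
  have hmemQ : Q ∈ ({P', Q} : Finset (Fin t → D)) :=
    Finset.mem_insert_of_mem (Finset.mem_singleton_self _)
  have hcard2 : ({P', Q} : Finset (Fin t → D)).card ≤ k :=
    le_trans (le_trans (Finset.card_insert_le _ _) (by simp)) hk
  have hcard1 : ∀ x : Fin t → D, ({x} : Finset (Fin t → D)).card ≤ k := by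
    intro x
    simp
    omega
  have hA : (F ({P', Q} : Finset (Fin t → D))).map (fun f (i : Fin ℓ) =>
        f ⟨P', hmemP'⟩ (Fin.castLE hℓ i))
      = (F {P'}).map (fun f (i : Fin ℓ) =>
        f ⟨P', Finset.mem_singleton_self _⟩ (Fin.castLE hℓ i)) := by
    have hPI : P' ∈ ({P', Q} : Finset (Fin t → D)) ∩ {P'} :=
      Finset.mem_inter.mpr ⟨hmemP', Finset.mem_singleton_self _⟩
    have h := congrArg (PMF.map (fun (a : {x // x ∈ ({P', Q} : Finset (Fin t → D)) ∩ {P'}} →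
        (Fin t → A)) (i : Fin ℓ) => a ⟨P', hPI⟩ (Fin.castLE hℓ i)))
      (hns {P', Q} {P'} hcard2 (hcard1 P'))
    rw [marginal, marginal, PMF.map_comp, PMF.map_comp] at h
    exact h
  have hB : (F ({P', Q} : Finset (Fin t → D))).map (fun f (i : Fin ℓ) =>
        f ⟨Q, hmemQ⟩ (Fin.castLE hℓ i))
      = (F {Q}).map (fun f (i : Fin ℓ) =>
        f ⟨Q, Finset.mem_singleton_self _⟩ (Fin.castLE hℓ i)) := by
    have hQI : Q ∈ ({P', Q} : Finset (Fin t → D)) ∩ {Q} :=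
      Finset.mem_inter.mpr ⟨hmemQ, Finset.mem_singleton_self _⟩
    have h := congrArg (PMF.map (fun (a : {x // x ∈ ({P', Q} : Finset (Fin t → D)) ∩ {Q}} →
        (Fin t → A)) (i : Fin ℓ) => a ⟨Q, hQI⟩ (Fin.castLE hℓ i)))
      (hns {P', Q} {Q} hcard2 (hcard1 Q))
    rw [marginal, marginal, PMF.map_comp, PMF.map_comp] at h
    exact h
  have htv := FlattenAux.tv_bound (F ({P', Q} : Finset (Fin t → D)))
    (fun f (i : Fin ℓ) => f ⟨P', hmemP'⟩ (Fin.castLE hℓ i))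
    (fun f (i : Fin ℓ) => f ⟨Q, hmemQ⟩ (Fin.castLE hℓ i))
    {f | ∀ j : Fin t, P' j = Q j →
      f ⟨P', by simp⟩ j = f ⟨Q, by simp⟩ j} ε
    (by
      intro f hf
      funext i
      exact hf (Fin.castLE hℓ i) (hP'Q i))
    (hcons P' Q) E
  rw [hL1, hL2, ← hA, ← hB]
  exact htv
end

section
/- Self-correction converts average-case linearity into worst-case linearity: let F be a 2t-repeated k-non-signaling function from ({0,1}^n)^{2t} to ({0,1})^{2t} with k ≥ 7 that passes the linearity test with probability at least 1-ε, i.e., for uniformly random X, Y ∈ ({0,1}^n)^{2t}, Pr[F(X) + F(Y) = F(X+Y)] ≥ 1-ε. Then the self-correction F̂ is (1-4ε)-linear: for every X, Y ∈ ({0,1}^n)^t, Pr[F̂(X) + F̂(Y) = F̂(X+Y)] ≥ 1-4ε. -/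
open MeasureTheory


namespace SCHelp

lemma toOM_le_one {α : Type*} (p : PMF α) (s : Set α) : p.toOuterMeasure s ≤ 1 := by
  rw [PMF.toOuterMeasure_apply]
  calc ∑' x, s.indicator (⇑p) x ≤ ∑' x, p x := by
        apply ENNReal.tsum_le_tsum
        intro x
        exact Set.indicator_le_self _ _ x
    _ = 1 := p.tsum_coe

lemma toOM_ne_top {α : Type*} (p : PMF α) (s : Set α) : p.toOuterMeasure s ≠ ⊤ :=
  ne_top_of_le_ne_top ENNReal.one_ne_top (toOM_le_one p s)

lemma toOM_add_compl {α : Type*} (p : PMF α) (s : Set α) :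
    p.toOuterMeasure s + p.toOuterMeasure sᶜ = 1 := by
  rw [PMF.toOuterMeasure_apply, PMF.toOuterMeasure_apply, ← ENNReal.tsum_add]
  rw [← p.tsum_coe]
  congr 1
  funext x
  by_cases hx : x ∈ s
  · simp [Set.indicator_of_mem hx, Set.indicator_of_notMem (by simpa using hx : x ∉ sᶜ)]
  · simp [Set.indicator_of_notMem hx, Set.indicator_of_mem (by simpa using hx : x ∈ sᶜ)]

lemma prob_compl {α : Type*} (p : PMF α) (s : Set α) :
    prob p s = 1 - prob p sᶜ := by
  unfold prob
  have h := toOM_add_compl p s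
  have h1 := toOM_ne_top p s
  have h2 := toOM_ne_top p sᶜ
  have := congrArg ENNReal.toReal h
  rw [ENNReal.toReal_add h1 h2] at this
  simp at this
  linarith

lemma prob_le_one {α : Type*} (p : PMF α) (s : Set α) : prob p s ≤ 1 := by
  unfold prob
  rw [← ENNReal.toReal_one]
  exact ENNReal.toReal_mono ENNReal.one_ne_top (toOM_le_one p s)

end SCHelp

namespace SCHelp

lemma tsum_map_mul {α β : Type*} [Fintype α] [Fintype β] (p : PMF α) (φ : α → β)
    (h : β → ENNReal) :
    ∑' b, (p.map φ) b * h b = ∑' a, p a * h (φ a) := by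
  classical
  rw [tsum_fintype, tsum_fintype]
  have : ∀ b, (p.map φ) b * h b = ∑ a : α, (if b = φ a then p a * h b else 0) := by
    intro b
    rw [PMF.map_apply, tsum_fintype, Finset.sum_mul]
    congr 1; funext a; split <;> simp
  simp_rw [this]
  rw [Finset.sum_comm]
  congr 1; funext a
  rw [Finset.sum_eq_single (φ a)]
  · simp
  · intro b _ hb; exact if_neg (fun h => hb h)
  · simp

lemma marginal_marginal {D A : Type*} {S T T' : Finset D} (p : PMF ({x // x ∈ S} → A))
    (h : T ⊆ S) (h' : T' ⊆ T) :
    marginal (marginal p h) h' = marginal p (h'.trans h) := by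
  unfold marginal
  rw [PMF.map_comp]
  rfl

lemma ns_marginal_eq {D A : Type*} [DecidableEq D] {k : ℕ}
    {F : (S : Finset D) → PMF ({x // x ∈ S} → A)} (hns : IsNonSignaling k F)
    {S1 S2 T : Finset D} (h1 : T ⊆ S1) (h2 : T ⊆ S2)
    (c1 : S1.card ≤ k) (c2 : S2.card ≤ k) :
    marginal (F S1) h1 = marginal (F S2) h2 := by
  have key := hns S1 S2 c1 c2
  have hT : T ⊆ S1 ∩ S2 := Finset.subset_inter h1 h2
  calc marginal (F S1) h1 = marginal (marginal (F S1) (Finset.inter_subset_left : S1 ∩ S2 ⊆ S1)) hT := by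
        rw [marginal_marginal]
    _ = marginal (marginal (F S2) (Finset.inter_subset_right : S1 ∩ S2 ⊆ S2)) hT := by rw [key]
    _ = marginal (F S2) h2 := by rw [marginal_marginal]

lemma ns_prob_eq {D A : Type*} [DecidableEq D] {k : ℕ}
    {F : (S : Finset D) → PMF ({x // x ∈ S} → A)} (hns : IsNonSignaling k F)
    {S1 S2 T : Finset D} (h1 : T ⊆ S1) (h2 : T ⊆ S2)
    (c1 : S1.card ≤ k) (c2 : S2.card ≤ k) (E : Set ({x // x ∈ T} → A)) :
    (F S1).toOuterMeasure (restrictAssign h1 ⁻¹' E) =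
    (F S2).toOuterMeasure (restrictAssign h2 ⁻¹' E) := by
  have := congrArg (fun p : PMF ({x // x ∈ T} → A) => p.toOuterMeasure E)
    (ns_marginal_eq hns h1 h2 c1 c2)
  simpa [marginal, PMF.toOuterMeasure_map_apply] using this

end SCHelp

namespace SCHelp

lemma map_equiv_uniform {α β : Type*} [Fintype α] [Fintype β] [Nonempty α] [Nonempty β]
    (e : α ≃ β) : (PMF.uniformOfFintype α).map e = PMF.uniformOfFintype β := by
  ext b
  rw [PMF.map_apply]
  rw [tsum_eq_single (e.symm b) (by intro a ha; rw [if_neg]; intro h; exact ha (by simp [h]))]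
  simp [PMF.uniformOfFintype_apply, Fintype.card_congr e]

section
variable {G : Type*} [AddCommGroup G]

def shuffle1 : (G×G×G)×(G×G×G) ≃ ((G×G)×(G×G))×(G×G) where
  toFun x := (((x.1.1, x.2.1), (x.1.2.1, x.2.2.1)), (x.1.2.2, x.2.2.2))
  invFun y := ((y.1.1.1, y.1.2.1, y.2.1), (y.1.1.2, y.1.2.2, y.2.2))
  left_inv x := rfl
  right_inv y := rfl

def shuffle2 (X Y : G) : (G×G×G)×(G×G×G) ≃ ((G×G)×(G×G))×(G×G) where
  toFun x := (((X + x.1.1, x.2.1), (Y + x.1.2.1, x.2.2.1)), (x.1.2.2, x.2.2.2))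
  invFun y := ((y.1.1.1 - X, y.1.2.1 - Y, y.2.1), (y.1.1.2, y.1.2.2, y.2.2))
  left_inv x := by
    obtain ⟨⟨r1,r2,r3⟩,w1,w2,w3⟩ := x
    simp only [Prod.mk.injEq, and_true, true_and]
    repeat' apply And.intro
    all_goals abel
  right_inv y := by
    obtain ⟨⟨⟨a1,b1⟩,a2,b2⟩,c,d⟩ := y
    simp only [Prod.mk.injEq, and_true, true_and]
    repeat' apply And.intro
    all_goals abel

def shuffle3 (X Y : G) : (G×G×G)×(G×G×G) ≃ ((G×G)×(G×G))×(G×G) where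
  toFun x := (((x.1.1 + x.1.2.1, x.2.1 + x.2.2.1), ((X + Y) + x.1.2.2, x.2.2.2)), (x.1.2.1, x.2.2.1))
  invFun y := ((y.1.1.1 - y.2.1, y.2.1, y.1.2.1 - (X+Y)), (y.1.1.2 - y.2.2, y.2.2, y.1.2.2))
  left_inv x := by
    obtain ⟨⟨r1,r2,r3⟩,w1,w2,w3⟩ := x
    simp only [Prod.mk.injEq, and_true, true_and]
    repeat' apply And.intro
    all_goals abel
  right_inv y := by
    obtain ⟨⟨⟨a1,b1⟩,a2,b2⟩,c,d⟩ := y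
    simp only [Prod.mk.injEq, and_true, true_and]
    repeat' apply And.intro
    all_goals abel

def shuffle4 (X Y : G) : (G×G×G)×(G×G×G) ≃ ((G×G)×(G×G))×(G×G) where
  toFun x := ((((X+Y) + (x.1.1 + x.1.2.1), x.2.1 + x.2.2.1), (x.1.2.2, x.2.2.2)), (x.1.2.1, x.2.2.1))
  invFun y := (((y.1.1.1 - (X+Y)) - y.2.1, y.2.1, y.1.2.1), (y.1.1.2 - y.2.2, y.2.2, y.1.2.2))
  left_inv x := by
    obtain ⟨⟨r1,r2,r3⟩,w1,w2,w3⟩ := x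
    simp only [Prod.mk.injEq, and_true, true_and]
    repeat' apply And.intro
    all_goals abel
  right_inv y := by
    obtain ⟨⟨⟨a1,b1⟩,a2,b2⟩,c,d⟩ := y
    simp only [Prod.mk.injEq, and_true, true_and]
    repeat' apply And.intro
    all_goals abel
end

section
variable {t : ℕ} {A : Type*}

def apE (t : ℕ) (A : Type*) : ((Fin t → A) × (Fin t → A)) ≃ (Fin (t+t) → A) where
  toFun p := Fin.append p.1 p.2
  invFun v := (fun i => v (Fin.castAdd t i), fun i => v (Fin.natAdd t i))
  left_inv p := by
    obtain ⟨a, b⟩ := p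
    simp only [Prod.mk.injEq]
    constructor <;> funext i
    · exact Fin.append_left a b i
    · exact Fin.append_right a b i
  right_inv v := by
    funext i
    induction i using Fin.addCases with
    | left i => exact Fin.append_left _ _ i
    | right i => exact Fin.append_right _ _ i

lemma append_add [AddMonoid A] (a b c d : Fin t → A) :
    Fin.append a c + Fin.append b d = Fin.append (a+b) (c+d) := by
  funext i
  induction i using Fin.addCases with
  | left i => simp only [Pi.add_apply, Fin.append_left]
  | right i => simp only [Pi.add_apply, Fin.append_right]

end

def tripleEquiv {D A : Type*} [DecidableEq D] (x y z : D) (hxy : x ≠ y) (hxz : x ≠ z)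
    (hyz : y ≠ z) : ({q // q ∈ ({x, y, z} : Finset D)} → A) ≃ A × A × A where
  toFun f := (f ⟨x, by simp⟩, f ⟨y, by simp⟩, f ⟨z, by simp⟩)
  invFun v q := if q.1 = x then v.1 else if q.1 = y then v.2.1 else v.2.2
  left_inv f := by
    funext q
    obtain ⟨q, hq⟩ := q
    simp only [Finset.mem_insert, Finset.mem_singleton] at hq
    rcases hq with h|h|h <;> subst h
    · simp
    · simp [Ne.symm hxy]
    · simp [Ne.symm hxz, Ne.symm hyz]
  right_inv v := by
    obtain ⟨a, b, c⟩ := v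
    simp [Ne.symm hxy, Ne.symm hxz, Ne.symm hyz]

lemma map_uniform_of_fst {α β γ : Type*} [Fintype α] [Fintype β] [Fintype γ]
    [Nonempty α] [Nonempty β] [Nonempty γ] (φ : α → β) (e : α ≃ β × γ)
    (he : ∀ a, (e a).1 = φ a) :
    (PMF.uniformOfFintype α).map φ = PMF.uniformOfFintype β := by
  have : φ = Prod.fst ∘ e := by funext a; exact (he a).symm
  rw [this, ← PMF.map_comp, map_equiv_uniform e]
  -- now need map fst uniform = uniform
  classical
  ext a
  rw [PMF.map_apply, tsum_fintype]
  simp only [PMF.uniformOfFintype_apply]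
  rw [Fintype.sum_prod_type]
  rw [show (∑ a' : β, ∑ b : γ, if a = (Prod.fst (a', b)) then ((Fintype.card (β × γ) : ENNReal))⁻¹ else 0)
      = (∑ a' : β, ∑ _b : γ, if a = a' then ((Fintype.card (β × γ) : ENNReal))⁻¹ else 0) from rfl]
  rw [Finset.sum_eq_single a]
  · simp only [if_pos rfl, if_true, eq_self_iff_true, Finset.sum_const, Finset.card_univ,
      nsmul_eq_mul, Fintype.card_prod, Nat.cast_mul]
    rw [ENNReal.mul_inv (by simp [Fintype.card_ne_zero]) (by simp)]
    rw [mul_comm ((Fintype.card β : ENNReal))⁻¹ ((Fintype.card γ : ENNReal))⁻¹, ← mul_assoc,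
      ENNReal.mul_inv_cancel (by simp [Fintype.card_ne_zero]) (by simp), one_mul]
  · intro a' _ ha'
    apply Finset.sum_eq_zero
    intro b _
    rw [if_neg (fun h => ha' h.symm)]
  · simp

end SCHelp

/-- A `2t`-repeated non-signaling function over `{0,1}^n`. -/
abbrev NSFam (n t : ℕ) :=
  (S : Finset (Fin t → Fin n → ZMod 2)) → PMF ({Q // Q ∈ S} → (Fin t → ZMod 2))

/-- Acceptance probability of the linearity test: sample uniform `X, Y`, query `F` on
`{X, Y, X+Y}` and check `F(X) + F(Y) = F(X+Y)` in all coordinates. -/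
noncomputable def linTestAccept {n t : ℕ} (F : NSFam n t) : ℝ :=
  prob ((PMF.uniformOfFintype ((Fin t → Fin n → ZMod 2) × (Fin t → Fin n → ZMod 2))).bind
    fun p => (F {p.1, p.2, p.1 + p.2}).map fun f =>
      (f ⟨p.1, by simp⟩, f ⟨p.2, by simp⟩, f ⟨p.1 + p.2, by simp⟩))
    {y | y.1 + y.2.1 = y.2.2}

/-- Acceptance probability of the consistency test on a `2t`-repeated function: sample
uniform `W, Z₁, Z₂`, query `F` on `{[W;Z₁], [W;Z₂]}` and check that the answers agree
on the first `t` coordinates. -/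
noncomputable def consTestAccept {n t : ℕ} (F : NSFam n (t + t)) : ℝ :=
  prob ((PMF.uniformOfFintype ((Fin t → Fin n → ZMod 2) × (Fin t → Fin n → ZMod 2) ×
      (Fin t → Fin n → ZMod 2))).bind
    fun w => (F {Fin.append w.1 w.2.1, Fin.append w.1 w.2.2}).map fun f =>
      (f ⟨Fin.append w.1 w.2.1, by simp⟩, f ⟨Fin.append w.1 w.2.2, by simp⟩))
    {y : (Fin (t + t) → ZMod 2) × (Fin (t + t) → ZMod 2) |
      ∀ j : Fin t, y.1 (Fin.castAdd t j) = y.2 (Fin.castAdd t j)}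

/-- The self-correction of a `2t`-repeated non-signaling function: a query `Q` is
answered by sampling fresh independent uniform `R, W`, querying `F` on
`{[R;W], [Q+R;W]}`, and returning the first `t` coordinates of
`F([R;W]) + F([Q+R;W])`. -/
noncomputable def selfCorrect {n t : ℕ} (F : NSFam n (t + t)) : NSFam n t :=
  fun S =>
    (PMF.uniformOfFintype (({Q // Q ∈ S} → (Fin t → Fin n → ZMod 2)) ×
        ({Q // Q ∈ S} → (Fin t → Fin n → ZMod 2)))).bind fun RW =>
      (F (Finset.univ.biUnion fun Q : {Q // Q ∈ S} =>
          {Fin.append (RW.1 Q) (RW.2 Q), Fin.append (Q.1 + RW.1 Q) (RW.2 Q)})).map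
        fun f Q j =>
          f ⟨Fin.append (RW.1 Q) (RW.2 Q),
              Finset.mem_biUnion.mpr ⟨Q, Finset.mem_univ _, Finset.mem_insert_self _ _⟩⟩
            (Fin.castAdd t j)
          + f ⟨Fin.append (Q.1 + RW.1 Q) (RW.2 Q),
              Finset.mem_biUnion.mpr ⟨Q, Finset.mem_univ _,
                Finset.mem_insert_of_mem (Finset.mem_singleton_self _)⟩⟩
            (Fin.castAdd t j)

namespace SCHelp

lemma card3 {α : Type*} [DecidableEq α] (a b c : α) : ({a,b,c} : Finset α).card ≤ 3 := by
  have h1 := Finset.card_insert_le a ({b,c} : Finset α)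
  have h2 := Finset.card_insert_le b ({c} : Finset α)
  simp only [Finset.card_singleton] at h2
  omega

lemma card4 {α : Type*} [DecidableEq α] (a b c d : α) : ({a,b,c,d} : Finset α).card ≤ 4 := by
  have h := Finset.card_insert_le a ({b,c,d} : Finset α)
  have h2 := card3 b c d
  omega

lemma card5 {α : Type*} [DecidableEq α] (a b c d e : α) : ({a,b,c,d,e} : Finset α).card ≤ 5 := by
  have h := Finset.card_insert_le a ({b,c,d,e} : Finset α)
  have h2 := card4 b c d e
  omega

lemma card6 {α : Type*} [DecidableEq α] (a b c d e f : α) :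
    ({a,b,c,d,e,f} : Finset α).card ≤ 6 := by
  have h := Finset.card_insert_le a ({b,c,d,e,f} : Finset α)
  have h2 := card5 b c d e f
  omega

lemma card_insert_le' {α : Type*} [DecidableEq α] (a : α) (s : Finset α) {m : ℕ}
    (h : s.card ≤ m) : (insert a s).card ≤ m + 1 := by
  have := Finset.card_insert_le a s
  omega

/-- Probability that the linearity test fails on a fixed pair of queries. -/
noncomputable def badPair {n t : ℕ} (F : NSFam n t)
    (p : (Fin t → Fin n → ZMod 2) × (Fin t → Fin n → ZMod 2)) : ENNReal :=
  (F {p.1, p.2, p.1 + p.2}).toOuterMeasure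
    {f | ¬ (f ⟨p.1, by simp⟩ + f ⟨p.2, by simp⟩ = f ⟨p.1 + p.2, by simp⟩)}

set_option maxHeartbeats 2000000 in
lemma chain_bound {n t k : ℕ} (F : NSFam n (t + t)) (hns : IsNonSignaling k F)
    (hk : 7 ≤ k)
    (A1 B1 A2 B2 Z0 V0 : Fin (t + t) → Fin n → ZMod 2)
    (bigS : Finset (Fin (t + t) → Fin n → ZMod 2)) (hbig : bigS.card ≤ 6)
    (ha1 : A1 ∈ bigS) (hb1 : B1 ∈ bigS) (ha2 : A2 ∈ bigS) (hb2 : B2 ∈ bigS)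
    (hz0 : Z0 ∈ bigS) (hv0 : V0 ∈ bigS)
    (hqq : (B1 + B2) + Z0 = (A1 + A2) + V0)
    (E : Set ({x // x ∈ bigS} → Fin (t + t) → ZMod 2))
    (hE : ∀ f, f ∈ E → ¬ ∀ j : Fin t,
      (f ⟨A1, ha1⟩ (Fin.castAdd t j) + f ⟨B1, hb1⟩ (Fin.castAdd t j))
        + (f ⟨A2, ha2⟩ (Fin.castAdd t j) + f ⟨B2, hb2⟩ (Fin.castAdd t j))
      = f ⟨Z0, hz0⟩ (Fin.castAdd t j) + f ⟨V0, hv0⟩ (Fin.castAdd t j)) :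
    (F bigS).toOuterMeasure E ≤
      badPair F (A1, A2) + badPair F (B1, B2)
        + badPair F (A1 + A2, V0) + badPair F (B1 + B2, Z0) := by
  classical
  have hz3 : ∀ a b c d e : ZMod 2, a + b = c → d + e = c → a + d = e + b := by decide
  -- the finsets used in the hybrid argument
  set T1 : Finset (Fin (t + t) → Fin n → ZMod 2) := insert (A1 + A2) bigS with hT1def
  set T2 : Finset (Fin (t + t) → Fin n → ZMod 2) :=
    insert (A1 + A2) (insert Z0 (insert V0 ({B1, B2, B1 + B2} : Finset _))) with hT2def
  set T3 : Finset (Fin (t + t) → Fin n → ZMod 2) :=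
    insert (B1 + B2) (insert Z0 ({A1 + A2, V0, (A1 + A2) + V0} : Finset _)) with hT3def
  -- cardinalities
  have hcT1 : T1.card ≤ k := by
    rw [hT1def]
    have := Finset.card_insert_le (A1 + A2) bigS; omega
  have hcbig : bigS.card ≤ k := by omega
  have hcT2 : T2.card ≤ k := by
    rw [hT2def]
    have := SCHelp.card6 (A1 + A2) Z0 V0 B1 B2 (B1 + B2); omega
  have hcT3 : T3.card ≤ k := by
    rw [hT3def]
    have := SCHelp.card5 (B1 + B2) Z0 (A1 + A2) V0 ((A1 + A2) + V0); omega
  have hctri : ∀ a b : Fin (t + t) → Fin n → ZMod 2, ({a, b, a + b} : Finset _).card ≤ k := by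
    intro a b; have := SCHelp.card3 a b (a + b); omega
  -- generic marginalization move
  have move : ∀ (T Sx : Finset (Fin (t + t) → Fin n → ZMod 2)) (h1 : T ⊆ Sx)
      (hc : Sx.card ≤ k) (hcT : T.card ≤ k) (E' : Set ({x // x ∈ T} → Fin (t + t) → ZMod 2)),
      (F Sx).toOuterMeasure (restrictAssign h1 ⁻¹' E') = (F T).toOuterMeasure E' := by
    intro T Sx h1 hc hcT E'
    have h := SCHelp.ns_prob_eq hns h1 (Finset.Subset.refl T) hc hcT E'
    have hid : restrictAssign (Finset.Subset.refl T) ⁻¹' E' = E' := by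
      have : restrictAssign (Finset.Subset.refl T) =
          (id : ({x // x ∈ T} → Fin (t + t) → ZMod 2) → _) := rfl
      rw [this, Set.preimage_id]
    rw [hid] at h
    exact h
  -- subsets
  have hsub_big_T1 : bigS ⊆ T1 := Finset.subset_insert _ _
  have hsub_tri1_T1 : ({A1, A2, A1 + A2} : Finset _) ⊆ T1 := by
    intro x hx
    simp only [Finset.mem_insert, Finset.mem_singleton] at hx
    rcases hx with rfl | rfl | rfl
    · exact Finset.mem_insert_of_mem ha1
    · exact Finset.mem_insert_of_mem ha2
    · exact Finset.mem_insert_self _ _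
  have hsub_P2_T1 : ({A1 + A2, B1, B2, Z0, V0} : Finset _) ⊆ T1 := by
    intro x hx
    simp only [Finset.mem_insert, Finset.mem_singleton] at hx
    rcases hx with rfl | rfl | rfl | rfl | rfl
    · exact Finset.mem_insert_self _ _
    · exact Finset.mem_insert_of_mem hb1
    · exact Finset.mem_insert_of_mem hb2
    · exact Finset.mem_insert_of_mem hz0
    · exact Finset.mem_insert_of_mem hv0
  have hsub_P2_T2 : ({A1 + A2, B1, B2, Z0, V0} : Finset _) ⊆ T2 := by
    intro x hx
    simp only [Finset.mem_insert, Finset.mem_singleton] at hx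
    rcases hx with rfl | rfl | rfl | rfl | rfl <;> simp [hT2def]
  have hsub_tri2_T2 : ({B1, B2, B1 + B2} : Finset _) ⊆ T2 := by
    intro x hx
    simp only [Finset.mem_insert, Finset.mem_singleton] at hx
    rcases hx with rfl | rfl | rfl <;> simp [hT2def]
  have hsub_P3_T2 : ({A1 + A2, B1 + B2, Z0, V0} : Finset _) ⊆ T2 := by
    intro x hx
    simp only [Finset.mem_insert, Finset.mem_singleton] at hx
    rcases hx with rfl | rfl | rfl | rfl <;> simp [hT2def]
  have hsub_P3_T3 : ({A1 + A2, B1 + B2, Z0, V0} : Finset _) ⊆ T3 := by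
    intro x hx
    simp only [Finset.mem_insert, Finset.mem_singleton] at hx
    rcases hx with rfl | rfl | rfl | rfl <;> simp [hT3def]
  have hsub_tri3_T3 : ({A1 + A2, V0, (A1 + A2) + V0} : Finset _) ⊆ T3 := by
    intro x hx
    simp only [Finset.mem_insert, Finset.mem_singleton] at hx
    rcases hx with rfl | rfl | rfl <;> simp [hT3def]
  have hsub_P4_T3 : ({B1 + B2, Z0, (A1 + A2) + V0} : Finset _) ⊆ T3 := by
    intro x hx
    simp only [Finset.mem_insert, Finset.mem_singleton] at hx
    rcases hx with rfl | rfl | rfl <;> simp [hT3def]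
  have hsub_P4_tri4 : ({B1 + B2, Z0, (A1 + A2) + V0} : Finset _) ⊆
      ({B1 + B2, Z0, (B1 + B2) + Z0} : Finset _) := by
    intro x hx
    simp only [Finset.mem_insert, Finset.mem_singleton] at hx
    rcases hx with rfl | rfl | rfl <;> simp [hqq]
  -- events
  set EP2 : Set ({x // x ∈ ({A1 + A2, B1, B2, Z0, V0} : Finset _)} → Fin (t + t) → ZMod 2) :=
    {f | ¬ ∀ j : Fin t, f ⟨A1 + A2, by simp⟩ (Fin.castAdd t j)
        + (f ⟨B1, by simp⟩ (Fin.castAdd t j) + f ⟨B2, by simp⟩ (Fin.castAdd t j))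
      = f ⟨Z0, by simp⟩ (Fin.castAdd t j) + f ⟨V0, by simp⟩ (Fin.castAdd t j)} with hEP2def
  set EP3 : Set ({x // x ∈ ({A1 + A2, B1 + B2, Z0, V0} : Finset _)} → Fin (t + t) → ZMod 2) :=
    {f | ¬ ∀ j : Fin t, f ⟨A1 + A2, by simp⟩ (Fin.castAdd t j)
        + f ⟨B1 + B2, by simp⟩ (Fin.castAdd t j)
      = f ⟨Z0, by simp⟩ (Fin.castAdd t j) + f ⟨V0, by simp⟩ (Fin.castAdd t j)} with hEP3def
  set EP4 : Set ({x // x ∈ ({B1 + B2, Z0, (A1 + A2) + V0} : Finset _)} → Fin (t + t) → ZMod 2) :=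
    {f | ¬ (f ⟨B1 + B2, by simp⟩ + f ⟨Z0, by simp⟩ = f ⟨(A1 + A2) + V0, by simp⟩)} with hEP4def
  set Etri1 : Set ({x // x ∈ ({A1, A2, A1 + A2} : Finset _)} → Fin (t + t) → ZMod 2) :=
    {f | ¬ (f ⟨A1, by simp⟩ + f ⟨A2, by simp⟩ = f ⟨A1 + A2, by simp⟩)} with hEtri1def
  set Etri2 : Set ({x // x ∈ ({B1, B2, B1 + B2} : Finset _)} → Fin (t + t) → ZMod 2) :=
    {f | ¬ (f ⟨B1, by simp⟩ + f ⟨B2, by simp⟩ = f ⟨B1 + B2, by simp⟩)} with hEtri2def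
  set Etri3 : Set ({x // x ∈ ({A1 + A2, V0, (A1 + A2) + V0} : Finset _)} → Fin (t + t) → ZMod 2) :=
    {f | ¬ (f ⟨A1 + A2, by simp⟩ + f ⟨V0, by simp⟩ = f ⟨(A1 + A2) + V0, by simp⟩)} with hEtri3def
  -- step 0 : move to T1
  have step0 : (F bigS).toOuterMeasure E =
      (F T1).toOuterMeasure (restrictAssign hsub_big_T1 ⁻¹' E) :=
    (move bigS T1 hsub_big_T1 hcT1 hcbig E).symm
  -- inclusion on T1
  have incl1 : (restrictAssign hsub_big_T1 ⁻¹' E) ⊆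
      (restrictAssign hsub_tri1_T1 ⁻¹' Etri1) ∪ (restrictAssign hsub_P2_T1 ⁻¹' EP2) := by
    intro f hf
    by_cases hbad : f ⟨A1, hsub_tri1_T1 (by simp)⟩ + f ⟨A2, hsub_tri1_T1 (by simp)⟩
        = f ⟨A1 + A2, Finset.mem_insert_self _ _⟩
    · right
      intro hall
      refine hE _ hf (fun j => ?_)
      simp only [hEP2def, restrictAssign, Set.mem_setOf_eq] at hall
      simp only [restrictAssign]
      have h1 := congrFun hbad (Fin.castAdd t j)
      have h2 := hall j
      simp only [Pi.add_apply] at h1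
      linear_combination h1 + h2
    · left
      exact hbad
  have step1 : (F T1).toOuterMeasure (restrictAssign hsub_big_T1 ⁻¹' E) ≤
      (F T1).toOuterMeasure (restrictAssign hsub_tri1_T1 ⁻¹' Etri1)
      + (F T1).toOuterMeasure (restrictAssign hsub_P2_T1 ⁻¹' EP2) :=
    (measure_mono incl1).trans (measure_union_le _ _)
  have hbp1 : (F T1).toOuterMeasure (restrictAssign hsub_tri1_T1 ⁻¹' Etri1)
      = badPair F (A1, A2) :=
    move _ _ hsub_tri1_T1 hcT1 (hctri A1 A2) Etri1
  -- move EP2 from T1 to T2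
  have hcP2 : ({A1 + A2, B1, B2, Z0, V0} : Finset _).card ≤ k := by
    have := SCHelp.card5 (A1 + A2) B1 B2 Z0 V0; omega
  have step2 : (F T1).toOuterMeasure (restrictAssign hsub_P2_T1 ⁻¹' EP2)
      = (F T2).toOuterMeasure (restrictAssign hsub_P2_T2 ⁻¹' EP2) := by
    rw [move _ _ hsub_P2_T1 hcT1 hcP2 EP2, move _ _ hsub_P2_T2 hcT2 hcP2 EP2]
  -- inclusion on T2
  have incl2 : (restrictAssign hsub_P2_T2 ⁻¹' EP2) ⊆
      (restrictAssign hsub_tri2_T2 ⁻¹' Etri2) ∪ (restrictAssign hsub_P3_T2 ⁻¹' EP3) := by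
    intro f hf
    by_cases hbad : f ⟨B1, hsub_tri2_T2 (by simp)⟩ + f ⟨B2, hsub_tri2_T2 (by simp)⟩
        = f ⟨B1 + B2, hsub_tri2_T2 (by simp)⟩
    · right
      intro hall
      refine hf (fun j => ?_)
      simp only [hEP3def, restrictAssign, Set.mem_setOf_eq] at hall
      simp only [hEP2def, restrictAssign, Set.mem_setOf_eq]
      have h1 := congrFun hbad (Fin.castAdd t j)
      have h2 := hall j
      simp only [Pi.add_apply] at h1
      linear_combination h2 + h1
    · left
      exact hbad
  have step3 : (F T2).toOuterMeasure (restrictAssign hsub_P2_T2 ⁻¹' EP2) ≤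
      (F T2).toOuterMeasure (restrictAssign hsub_tri2_T2 ⁻¹' Etri2)
      + (F T2).toOuterMeasure (restrictAssign hsub_P3_T2 ⁻¹' EP3) :=
    (measure_mono incl2).trans (measure_union_le _ _)
  have hbp2 : (F T2).toOuterMeasure (restrictAssign hsub_tri2_T2 ⁻¹' Etri2)
      = badPair F (B1, B2) :=
    move _ _ hsub_tri2_T2 hcT2 (hctri B1 B2) Etri2
  -- move EP3 from T2 to T3
  have hcP3 : ({A1 + A2, B1 + B2, Z0, V0} : Finset _).card ≤ k := by
    have := SCHelp.card4 (A1 + A2) (B1 + B2) Z0 V0; omega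
  have step4 : (F T2).toOuterMeasure (restrictAssign hsub_P3_T2 ⁻¹' EP3)
      = (F T3).toOuterMeasure (restrictAssign hsub_P3_T3 ⁻¹' EP3) := by
    rw [move _ _ hsub_P3_T2 hcT2 hcP3 EP3, move _ _ hsub_P3_T3 hcT3 hcP3 EP3]
  -- inclusion on T3
  have incl3 : (restrictAssign hsub_P3_T3 ⁻¹' EP3) ⊆
      (restrictAssign hsub_tri3_T3 ⁻¹' Etri3) ∪ (restrictAssign hsub_P4_T3 ⁻¹' EP4) := by
    intro f hf
    by_cases hbad : f ⟨A1 + A2, hsub_tri3_T3 (by simp)⟩ + f ⟨V0, hsub_tri3_T3 (by simp)⟩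
        = f ⟨(A1 + A2) + V0, hsub_tri3_T3 (by simp)⟩
    · right
      intro h4
      refine hf (fun j => ?_)
      simp only [hEP4def, restrictAssign, Set.mem_setOf_eq, not_not] at h4
      simp only [hEP3def, restrictAssign, Set.mem_setOf_eq]
      have h1 := congrFun hbad (Fin.castAdd t j)
      have h2 := congrFun h4 (Fin.castAdd t j)
      simp only [Pi.add_apply] at h1 h2
      exact hz3 _ _ _ _ _ h1 h2
    · left
      exact hbad
  have step5 : (F T3).toOuterMeasure (restrictAssign hsub_P3_T3 ⁻¹' EP3) ≤
      (F T3).toOuterMeasure (restrictAssign hsub_tri3_T3 ⁻¹' Etri3)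
      + (F T3).toOuterMeasure (restrictAssign hsub_P4_T3 ⁻¹' EP4) :=
    (measure_mono incl3).trans (measure_union_le _ _)
  have hbp3 : (F T3).toOuterMeasure (restrictAssign hsub_tri3_T3 ⁻¹' Etri3)
      = badPair F (A1 + A2, V0) :=
    move _ _ hsub_tri3_T3 hcT3 (hctri (A1 + A2) V0) Etri3
  -- final: EP4 to the fourth triple
  have hbp4 : (F T3).toOuterMeasure (restrictAssign hsub_P4_T3 ⁻¹' EP4)
      = badPair F (B1 + B2, Z0) := by
    have hcP4 : ({B1 + B2, Z0, (A1 + A2) + V0} : Finset _).card ≤ k := by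
      have := SCHelp.card3 (B1 + B2) Z0 ((A1 + A2) + V0); omega
    rw [move _ _ hsub_P4_T3 hcT3 hcP4 EP4,
      ← move _ _ hsub_P4_tri4 (hctri (B1 + B2) Z0) hcP4 EP4]
    have hsetEq : (restrictAssign hsub_P4_tri4 ⁻¹' EP4) =
        {f : {x // x ∈ ({B1 + B2, Z0, (B1 + B2) + Z0} : Finset _)} → Fin (t + t) → ZMod 2 |
          ¬ (f ⟨B1 + B2, by simp⟩ + f ⟨Z0, by simp⟩ = f ⟨(B1 + B2) + Z0, by simp⟩)} := by
      ext f
      simp only [hEP4def, Set.mem_preimage, restrictAssign, Set.mem_setOf_eq]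
      rw [show (⟨(A1 + A2) + V0, hsub_P4_tri4 (by simp)⟩ :
          {x // x ∈ ({B1 + B2, Z0, (B1 + B2) + Z0} : Finset _)}) = ⟨(B1 + B2) + Z0, by simp⟩
        from Subtype.ext hqq.symm]
    rw [hsetEq]
    rfl
  -- assemble
  calc (F bigS).toOuterMeasure E
      = (F T1).toOuterMeasure (restrictAssign hsub_big_T1 ⁻¹' E) := step0
    _ ≤ (F T1).toOuterMeasure (restrictAssign hsub_tri1_T1 ⁻¹' Etri1)
        + (F T1).toOuterMeasure (restrictAssign hsub_P2_T1 ⁻¹' EP2) := step1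
    _ = badPair F (A1, A2) + (F T2).toOuterMeasure (restrictAssign hsub_P2_T2 ⁻¹' EP2) := by
        rw [hbp1, step2]
    _ ≤ badPair F (A1, A2) + ((F T2).toOuterMeasure (restrictAssign hsub_tri2_T2 ⁻¹' Etri2)
        + (F T2).toOuterMeasure (restrictAssign hsub_P3_T2 ⁻¹' EP3)) := by
        exact add_le_add_right step3 _
    _ = badPair F (A1, A2) + (badPair F (B1, B2)
        + (F T3).toOuterMeasure (restrictAssign hsub_P3_T3 ⁻¹' EP3)) := by
        rw [hbp2, step4]
    _ ≤ badPair F (A1, A2) + (badPair F (B1, B2)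
        + ((F T3).toOuterMeasure (restrictAssign hsub_tri3_T3 ⁻¹' Etri3)
          + (F T3).toOuterMeasure (restrictAssign hsub_P4_T3 ⁻¹' EP4))) := by
        exact add_le_add_right (add_le_add_right step5 _) _
    _ = badPair F (A1, A2) + (badPair F (B1, B2)
        + (badPair F (A1 + A2, V0) + badPair F (B1 + B2, Z0))) := by
        rw [hbp3, hbp4]
    _ = badPair F (A1, A2) + badPair F (B1, B2)
        + badPair F (A1 + A2, V0) + badPair F (B1 + B2, Z0) := by
        ring

end SCHelp

set_option maxHeartbeats 4000000 in
/-- if a `2t`-repeated `k`-non-signaling function (`k ≥ 7`) passes the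
linearity test with probability at least `1-ε`, then its self-correction is
`(1-4ε)`-linear: for every `X, Y`, querying it on `{X, Y, X+Y}`, with probability at
least `1-4ε` it holds that `F̂(X) + F̂(Y) = F̂(X+Y)`. -/
theorem selfCorrect_linear {n t k : ℕ} (ε : ℝ) (F : NSFam n (t + t))
    (hns : IsNonSignaling k F) (hk : 7 ≤ k)
    (hlin : linTestAccept F ≥ 1 - ε) :
    ∀ X Y : Fin t → Fin n → ZMod 2,
      prob (selfCorrect F {X, Y, X + Y})
        {f | ∀ j : Fin t, f ⟨X, by simp⟩ j + f ⟨Y, by simp⟩ j = f ⟨X + Y, by simp⟩ j}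
        ≥ 1 - 4 * ε := by
  classical
  intro X Y
  have hε : 0 ≤ ε := by
    have h1 : linTestAccept F ≤ 1 := by
      unfold linTestAccept
      exact SCHelp.prob_le_one _ _
    linarith
  have hzmod : ∀ a : ZMod 2, a + a = 0 := by decide
  by_cases hdeg : X = 0 ∨ Y = 0 ∨ X = Y
  · -- degenerate cases: the event holds with probability 1
    set S : Finset (Fin t → Fin n → ZMod 2) := {X, Y, X + Y} with hS
    have hsupp : (selfCorrect F S).support ⊆
        {f : {Q // Q ∈ S} → (Fin t → ZMod 2) | ∀ j : Fin t,
          f ⟨X, by simp [hS]⟩ j + f ⟨Y, by simp [hS]⟩ j = f ⟨X + Y, by simp [hS]⟩ j} := by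
      intro f0 hf0
      simp only [selfCorrect, PMF.support_bind, PMF.support_map, Set.mem_iUnion,
        Set.mem_image] at hf0
      obtain ⟨RW, -, f, -, hf⟩ := hf0
      subst hf
      -- key: any query whose value is 0 gets answer 0
      have hzeroq : ∀ (Q : {Q // Q ∈ S}) (hQ : Q.1 = 0) (j : Fin t),
          f ⟨Fin.append (RW.1 Q) (RW.2 Q), Finset.mem_biUnion.mpr
              ⟨Q, Finset.mem_univ _, Finset.mem_insert_self _ _⟩⟩ (Fin.castAdd t j)
          + f ⟨Fin.append (Q.1 + RW.1 Q) (RW.2 Q), Finset.mem_biUnion.mpr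
              ⟨Q, Finset.mem_univ _, Finset.mem_insert_of_mem (Finset.mem_singleton_self _)⟩⟩
            (Fin.castAdd t j) = 0 := by
        intro Q hQ j
        have hpt : Fin.append (Q.1 + RW.1 Q) (RW.2 Q) = Fin.append (RW.1 Q) (RW.2 Q) := by
          rw [hQ, zero_add]
        have : (⟨Fin.append (Q.1 + RW.1 Q) (RW.2 Q), Finset.mem_biUnion.mpr
              ⟨Q, Finset.mem_univ _, Finset.mem_insert_of_mem (Finset.mem_singleton_self _)⟩⟩ :
              {x // x ∈ Finset.univ.biUnion fun Q : {Q // Q ∈ S} =>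
                {Fin.append (RW.1 Q) (RW.2 Q), Fin.append (Q.1 + RW.1 Q) (RW.2 Q)}})
            = ⟨Fin.append (RW.1 Q) (RW.2 Q), Finset.mem_biUnion.mpr
              ⟨Q, Finset.mem_univ _, Finset.mem_insert_self _ _⟩⟩ := Subtype.ext hpt
        rw [this]
        exact hzmod _
      -- goal: membership in event set
      have main : ∀ (gv : {Q // Q ∈ S} → Fin t → ZMod 2),
          (∀ (Q : {Q // Q ∈ S}), Q.1 = 0 → ∀ j : Fin t, gv Q j = 0) →
          ∀ j : Fin t, gv ⟨X, by simp [hS]⟩ j + gv ⟨Y, by simp [hS]⟩ j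
            = gv ⟨X + Y, by simp [hS]⟩ j := by
        intro gv h0 j
        rcases hdeg with h | h | h
        · have e : (⟨X + Y, by simp [hS]⟩ : {Q // Q ∈ S}) = ⟨Y, by simp [hS]⟩ :=
            Subtype.ext (by show X + Y = Y; rw [h, zero_add])
          rw [e, h0 ⟨X, by simp [hS]⟩ h j, zero_add]
        · have e : (⟨X + Y, by simp [hS]⟩ : {Q // Q ∈ S}) = ⟨X, by simp [hS]⟩ :=
            Subtype.ext (by show X + Y = X; rw [h, add_zero])
          rw [e, h0 ⟨Y, by simp [hS]⟩ h j, add_zero]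
        · have hXX : X + Y = 0 := by rw [← h]; funext i j'; exact hzmod _
          have e : (⟨Y, by simp [hS]⟩ : {Q // Q ∈ S}) = ⟨X, by simp [hS]⟩ :=
            Subtype.ext h.symm
          rw [e, h0 ⟨X + Y, by simp [hS]⟩ hXX j, hzmod]
      exact fun j => main _ (fun Q hQ j' => hzeroq Q hQ j') j
    have hone : (selfCorrect F S).toOuterMeasure
        {f : {Q // Q ∈ S} → (Fin t → ZMod 2) | ∀ j : Fin t,
          f ⟨X, by simp [hS]⟩ j + f ⟨Y, by simp [hS]⟩ j = f ⟨X + Y, by simp [hS]⟩ j} = 1 :=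
      (PMF.toOuterMeasure_apply_eq_one_iff _ _).mpr hsupp
    unfold prob
    rw [hone]
    simp
    linarith
  · push_neg at hdeg
    obtain ⟨hX0, hY0, hXY⟩ := hdeg
    have hxz : X ≠ X + Y := fun h => hY0 (left_eq_add.mp h)
    have hyz : Y ≠ X + Y := fun h => hX0 (right_eq_add.mp h)
    -- subtype points of the query set
    let xh : {Q // Q ∈ ({X, Y, X + Y} : Finset (Fin t → Fin n → ZMod 2))} := ⟨X, by simp⟩
    let yh : {Q // Q ∈ ({X, Y, X + Y} : Finset (Fin t → Fin n → ZMod 2))} := ⟨Y, by simp⟩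
    let zh : {Q // Q ∈ ({X, Y, X + Y} : Finset (Fin t → Fin n → ZMod 2))} := ⟨X + Y, by simp⟩
    -- equivalences showing that each hybrid pair is uniformly distributed
    let cE := SCHelp.tripleEquiv (A := Fin t → Fin n → ZMod 2) X Y (X + Y) hXY hxz hyz
    let apE2 := SCHelp.apE t (Fin n → ZMod 2)
    let E1 := (cE.prodCongr cE).trans ((SCHelp.shuffle1).trans
      ((apE2.prodCongr apE2).prodCongr (Equiv.refl _)))
    let E2 := (cE.prodCongr cE).trans ((SCHelp.shuffle2 X Y).trans
      ((apE2.prodCongr apE2).prodCongr (Equiv.refl _)))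
    let E3 := (cE.prodCongr cE).trans ((SCHelp.shuffle3 X Y).trans
      ((apE2.prodCongr apE2).prodCongr (Equiv.refl _)))
    let E4 := (cE.prodCongr cE).trans ((SCHelp.shuffle4 X Y).trans
      ((apE2.prodCongr apE2).prodCongr (Equiv.refl _)))
    let φ1 := fun RW => (E1 RW).1
    let φ2 := fun RW => (E2 RW).1
    let φ3 := fun RW => (E3 RW).1
    let φ4 := fun RW => (E4 RW).1
    have hmap1 : (PMF.uniformOfFintype _).map φ1 = PMF.uniformOfFintype _ :=
      SCHelp.map_uniform_of_fst _ E1 (fun _ => rfl)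
    have hmap2 : (PMF.uniformOfFintype _).map φ2 = PMF.uniformOfFintype _ :=
      SCHelp.map_uniform_of_fst _ E2 (fun _ => rfl)
    have hmap3 : (PMF.uniformOfFintype _).map φ3 = PMF.uniformOfFintype _ :=
      SCHelp.map_uniform_of_fst _ E3 (fun _ => rfl)
    have hmap4 : (PMF.uniformOfFintype _).map φ4 = PMF.uniformOfFintype _ :=
      SCHelp.map_uniform_of_fst _ E4 (fun _ => rfl)
    -- average failure probability of the linearity test
    have claimA : ∑' pr : (Fin (t + t) → Fin n → ZMod 2) × (Fin (t + t) → Fin n → ZMod 2),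
        (PMF.uniformOfFintype ((Fin (t + t) → Fin n → ZMod 2) × (Fin (t + t) → Fin n → ZMod 2))) pr
          * SCHelp.badPair F pr ≤ ENNReal.ofReal ε := by
      set p0 := (PMF.uniformOfFintype ((Fin (t + t) → Fin n → ZMod 2) ×
          (Fin (t + t) → Fin n → ZMod 2))).bind
        (fun p => (F {p.1, p.2, p.1 + p.2}).map fun f =>
          (f ⟨p.1, by simp⟩, f ⟨p.2, by simp⟩, f ⟨p.1 + p.2, by simp⟩)) with hp0
      have hacc : prob p0 {y | y.1 + y.2.1 = y.2.2} ≥ 1 - ε := hlin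
      have hcompl : prob p0 {y | y.1 + y.2.1 = y.2.2}ᶜ ≤ ε := by
        have := SCHelp.prob_compl p0 {y | y.1 + y.2.1 = y.2.2}
        linarith
      have heq : p0.toOuterMeasure ({y | y.1 + y.2.1 = y.2.2}ᶜ)
          = ∑' pr : (Fin (t + t) → Fin n → ZMod 2) × (Fin (t + t) → Fin n → ZMod 2),
            (PMF.uniformOfFintype _) pr * SCHelp.badPair F pr := by
        rw [hp0, PMF.toOuterMeasure_bind_apply]
        congr 1
        funext pr
        rw [PMF.toOuterMeasure_map_apply]
        rfl
      rw [← heq]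
      calc p0.toOuterMeasure ({y | y.1 + y.2.1 = y.2.2}ᶜ)
          = ENNReal.ofReal (prob p0 ({y | y.1 + y.2.1 = y.2.2}ᶜ)) :=
            (ENNReal.ofReal_toReal (SCHelp.toOM_ne_top _ _)).symm
        _ ≤ ENNReal.ofReal ε := ENNReal.ofReal_le_ofReal hcompl
    -- reduce to bounding the complement
    rw [SCHelp.prob_compl]
    have hM : (selfCorrect F {X, Y, X + Y}).toOuterMeasure
        ({f : {Q // Q ∈ ({X, Y, X + Y} : Finset (Fin t → Fin n → ZMod 2))} → Fin t → ZMod 2 |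
          ∀ j : Fin t, f ⟨X, by simp⟩ j + f ⟨Y, by simp⟩ j = f ⟨X + Y, by simp⟩ j}ᶜ)
        ≤ ENNReal.ofReal (4 * ε) := by
      simp only [selfCorrect]
      rw [PMF.toOuterMeasure_bind_apply]
      refine le_trans (ENNReal.tsum_le_tsum (fun RW => ?_) :
          _ ≤ ∑' RW : ({Q // Q ∈ ({X, Y, X + Y} : Finset (Fin t → Fin n → ZMod 2))} →
              (Fin t → Fin n → ZMod 2)) × ({Q // Q ∈ ({X, Y, X + Y} :
              Finset (Fin t → Fin n → ZMod 2))} → (Fin t → Fin n → ZMod 2)),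
            (PMF.uniformOfFintype _) RW *
              (SCHelp.badPair F (φ1 RW) + SCHelp.badPair F (φ2 RW)
                + SCHelp.badPair F (φ3 RW) + SCHelp.badPair F (φ4 RW))) ?_
      · -- pointwise bound via the chain argument
        refine mul_le_mul_right ?_ _
        rw [PMF.toOuterMeasure_map_apply]
        have h3 : φ3 RW = (Fin.append (RW.1 xh) (RW.2 xh) + Fin.append (RW.1 yh) (RW.2 yh),
            Fin.append ((X + Y) + RW.1 zh) (RW.2 zh)) :=
          Prod.ext_iff.mpr ⟨(SCHelp.append_add _ _ _ _).symm, rfl⟩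
        have h4 : φ4 RW = (Fin.append (X + RW.1 xh) (RW.2 xh)
            + Fin.append (Y + RW.1 yh) (RW.2 yh), Fin.append (RW.1 zh) (RW.2 zh)) := by
          refine Prod.ext_iff.mpr ⟨?_, rfl⟩
          show Fin.append ((X + Y) + (RW.1 xh + RW.1 yh)) (RW.2 xh + RW.2 yh) = _
          rw [SCHelp.append_add, show (X + RW.1 xh) + (Y + RW.1 yh)
            = (X + Y) + (RW.1 xh + RW.1 yh) from by abel]
        have hqq : (Fin.append (X + RW.1 xh) (RW.2 xh) + Fin.append (Y + RW.1 yh) (RW.2 yh))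
              + Fin.append (RW.1 zh) (RW.2 zh)
            = (Fin.append (RW.1 xh) (RW.2 xh) + Fin.append (RW.1 yh) (RW.2 yh))
              + Fin.append ((X + Y) + RW.1 zh) (RW.2 zh) := by
          simp only [SCHelp.append_add]
          rw [show ((X + RW.1 xh) + (Y + RW.1 yh)) + RW.1 zh
            = (RW.1 xh + RW.1 yh) + ((X + Y) + RW.1 zh) from by abel]
        rw [show φ1 RW = (Fin.append (RW.1 xh) (RW.2 xh), Fin.append (RW.1 yh) (RW.2 yh))
            from rfl,
          show φ2 RW = (Fin.append (X + RW.1 xh) (RW.2 xh), Fin.append (Y + RW.1 yh) (RW.2 yh))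
            from rfl, h3, h4]
        have hc6 : (Finset.univ.biUnion fun Q : {Q // Q ∈ ({X, Y, X + Y} :
            Finset (Fin t → Fin n → ZMod 2))} =>
            ({Fin.append (RW.1 Q) (RW.2 Q), Fin.append (Q.1 + RW.1 Q) (RW.2 Q)} :
              Finset (Fin (t + t) → Fin n → ZMod 2))).card ≤ 6 := by
          refine le_trans Finset.card_biUnion_le ?_
          have hstep : ∀ Q : {Q // Q ∈ ({X, Y, X + Y} :
              Finset (Fin t → Fin n → ZMod 2))}, ({Fin.append (RW.1 Q) (RW.2 Q),
              Fin.append (Q.1 + RW.1 Q) (RW.2 Q)} :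
              Finset (Fin (t + t) → Fin n → ZMod 2)).card ≤ 2 := by
            intro Q
            have := Finset.card_insert_le (Fin.append (RW.1 Q) (RW.2 Q))
              ({Fin.append (Q.1 + RW.1 Q) (RW.2 Q)} : Finset _)
            simp only [Finset.card_singleton] at this
            omega
          calc ∑ Q : {Q // Q ∈ ({X, Y, X + Y} : Finset (Fin t → Fin n → ZMod 2))},
                ({Fin.append (RW.1 Q) (RW.2 Q), Fin.append (Q.1 + RW.1 Q) (RW.2 Q)} :
                  Finset (Fin (t + t) → Fin n → ZMod 2)).card
              ≤ ∑ _Q : {Q // Q ∈ ({X, Y, X + Y} : Finset (Fin t → Fin n → ZMod 2))}, 2 :=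
                Finset.sum_le_sum (fun Q _ => hstep Q)
            _ = 2 * Fintype.card {Q // Q ∈ ({X, Y, X + Y} :
                Finset (Fin t → Fin n → ZMod 2))} := by
                rw [Finset.sum_const, Finset.card_univ, smul_eq_mul, mul_comm]
            _ ≤ 6 := by
                have h1 := SCHelp.card3 X Y (X + Y)
                have h2 := Fintype.card_coe ({X, Y, X + Y} :
                  Finset (Fin t → Fin n → ZMod 2))
                omega
        exact SCHelp.chain_bound F hns hk
          (Fin.append (RW.1 xh) (RW.2 xh)) (Fin.append (X + RW.1 xh) (RW.2 xh))
          (Fin.append (RW.1 yh) (RW.2 yh)) (Fin.append (Y + RW.1 yh) (RW.2 yh))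
          (Fin.append (RW.1 zh) (RW.2 zh)) (Fin.append ((X + Y) + RW.1 zh) (RW.2 zh))
          _ hc6
          (Finset.mem_biUnion.mpr ⟨xh, Finset.mem_univ _, Finset.mem_insert_self _ _⟩)
          (Finset.mem_biUnion.mpr ⟨xh, Finset.mem_univ _,
            Finset.mem_insert_of_mem (Finset.mem_singleton_self _)⟩)
          (Finset.mem_biUnion.mpr ⟨yh, Finset.mem_univ _, Finset.mem_insert_self _ _⟩)
          (Finset.mem_biUnion.mpr ⟨yh, Finset.mem_univ _,
            Finset.mem_insert_of_mem (Finset.mem_singleton_self _)⟩)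
          (Finset.mem_biUnion.mpr ⟨zh, Finset.mem_univ _, Finset.mem_insert_self _ _⟩)
          (Finset.mem_biUnion.mpr ⟨zh, Finset.mem_univ _,
            Finset.mem_insert_of_mem (Finset.mem_singleton_self _)⟩)
          hqq _ (fun f hf => hf)
      · -- sum the four averaged failure probabilities
        calc ∑' RW : ({Q // Q ∈ ({X, Y, X + Y} : Finset (Fin t → Fin n → ZMod 2))} →
              (Fin t → Fin n → ZMod 2)) × ({Q // Q ∈ ({X, Y, X + Y} :
              Finset (Fin t → Fin n → ZMod 2))} → (Fin t → Fin n → ZMod 2)),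
            (PMF.uniformOfFintype _) RW *
              (SCHelp.badPair F (φ1 RW) + SCHelp.badPair F (φ2 RW)
                + SCHelp.badPair F (φ3 RW) + SCHelp.badPair F (φ4 RW))
            = (∑' RW, (PMF.uniformOfFintype _) RW * SCHelp.badPair F (φ1 RW))
              + (∑' RW, (PMF.uniformOfFintype _) RW * SCHelp.badPair F (φ2 RW))
              + (∑' RW, (PMF.uniformOfFintype _) RW * SCHelp.badPair F (φ3 RW))
              + (∑' RW, (PMF.uniformOfFintype _) RW * SCHelp.badPair F (φ4 RW)) := by
              rw [← ENNReal.tsum_add, ← ENNReal.tsum_add, ← ENNReal.tsum_add]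
              exact tsum_congr (fun RW => by ring)
          _ ≤ ENNReal.ofReal ε + ENNReal.ofReal ε + ENNReal.ofReal ε + ENNReal.ofReal ε := by
              have g1 : (∑' RW, (PMF.uniformOfFintype _) RW * SCHelp.badPair F (φ1 RW))
                  ≤ ENNReal.ofReal ε := by
                rw [← SCHelp.tsum_map_mul _ φ1 (SCHelp.badPair F), hmap1]; exact claimA
              have g2 : (∑' RW, (PMF.uniformOfFintype _) RW * SCHelp.badPair F (φ2 RW))
                  ≤ ENNReal.ofReal ε := by
                rw [← SCHelp.tsum_map_mul _ φ2 (SCHelp.badPair F), hmap2]; exact claimA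
              have g3 : (∑' RW, (PMF.uniformOfFintype _) RW * SCHelp.badPair F (φ3 RW))
                  ≤ ENNReal.ofReal ε := by
                rw [← SCHelp.tsum_map_mul _ φ3 (SCHelp.badPair F), hmap3]; exact claimA
              have g4 : (∑' RW, (PMF.uniformOfFintype _) RW * SCHelp.badPair F (φ4 RW))
                  ≤ ENNReal.ofReal ε := by
                rw [← SCHelp.tsum_map_mul _ φ4 (SCHelp.badPair F), hmap4]; exact claimA
              exact add_le_add (add_le_add (add_le_add g1 g2) g3) g4
          _ = ENNReal.ofReal (4 * ε) := by
              rw [ENNReal.ofReal_mul (by norm_num : (0:ℝ) ≤ 4)]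
              rw [show ENNReal.ofReal (4:ℝ) = 4 from by norm_num [ENNReal.ofReal]]
              ring
    have hfin : prob (selfCorrect F {X, Y, X + Y})
        ({f : {Q // Q ∈ ({X, Y, X + Y} : Finset (Fin t → Fin n → ZMod 2))} → Fin t → ZMod 2 |
          ∀ j : Fin t, f ⟨X, by simp⟩ j + f ⟨Y, by simp⟩ j = f ⟨X + Y, by simp⟩ j}ᶜ)
        ≤ 4 * ε := by
      unfold prob
      exact ENNReal.toReal_le_of_le_ofReal (by linarith) hM
    linarith
end

section
/- Self-correction of a 2t-repeated k-non-signaling function is non-signaling: given a 2t-repeated k-non-signaling function F from ({0,1}^n)^{2t} to ({0,1})^{2t}, its self-correction F̂ — which answers a query set {Q_1,...,Q_s}, s ≤ ⌊k/2⌋, by sampling independent uniform R_i, W_i ∈ ({0,1}^n)^t, querying F on ∪_i {[R_i;W_i],[Q_i+R_i;W_i]}, and outputting F̂(Q_i) = first t coordinates of F([R_i;W_i]) + F([Q_i+R_i;W_i]) — is a well-defined t-repeated ⌊k/2⌋-non-signaling function; i.e., for any two query sets S, T of size at most ⌊k/2⌋, the marginal distributions of F̂_S and F̂_T restricted to S ∩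 T are equal. -/
open scoped ENNReal


lemma marginal_marginal {D A : Type*} {S U T : Finset D} (p : PMF ({x // x ∈ S} → A))
    (h1 : U ⊆ S) (h2 : T ⊆ U) :
    marginal (marginal p h1) h2 = marginal p (h2.trans h1) := by
  simp only [marginal, PMF.map_comp]
  rfl

lemma marginal_refl {D A : Type*} {S : Finset D} (p : PMF ({x // x ∈ S} → A))
    (h : S ⊆ S) : marginal p h = p := by
  have : restrictAssign (A := A) h = id := by
    funext f x; rfl
  simp [marginal, this, PMF.map_id]

lemma uniform_map_equiv {A B : Type*} [Fintype A] [Nonempty A] [Fintype B] [Nonempty B]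
    (e : A ≃ B) : (PMF.uniformOfFintype A).map e = PMF.uniformOfFintype B := by
  ext b
  rw [PMF.map_apply, tsum_eq_single (e.symm b) (by
    intro a ha
    rw [if_neg]
    intro hba; exact ha (by rw [hba, Equiv.symm_apply_apply])),
    if_pos (by simp), PMF.uniformOfFintype_apply, PMF.uniformOfFintype_apply,
    Fintype.card_congr e]

lemma uniform_map_fst {B C : Type*} [Fintype B] [Nonempty B] [Fintype C] [Nonempty C] :
    (PMF.uniformOfFintype (B × C)).map Prod.fst = PMF.uniformOfFintype B := by
  classical
  ext b
  rw [PMF.map_apply, tsum_fintype]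
  simp only [PMF.uniformOfFintype_apply]
  rw [Fintype.sum_prod_type]
  have h1 : ∀ b' : B, (∑ _c : C, if b = b' then ((Fintype.card (B × C) : ℝ≥0∞))⁻¹ else 0)
      = if b = b' then (Fintype.card C : ℝ≥0∞) * ((Fintype.card (B × C) : ℝ≥0∞))⁻¹ else 0 := by
    intro b'
    split <;> simp [Finset.sum_const, mul_comm]
  simp only [h1, Finset.sum_ite_eq' Finset.univ b, Finset.mem_univ, if_true]
  rw [Fintype.card_prod, Nat.cast_mul, ENNReal.mul_inv (by simp) (by simp),
    ← mul_assoc, mul_comm (Fintype.card C : ℝ≥0∞), mul_assoc,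
    ENNReal.mul_inv_cancel (by simp [Fintype.card_ne_zero]) (by simp), mul_one]
  simp

def splitEquiv {D X : Type*} [DecidableEq D] {U S : Finset D} (h : U ⊆ S) :
    ({x // x ∈ S} → X) ≃ ({x // x ∈ U} → X) × ({x // x ∈ S \ U} → X) where
  toFun f := (restrictAssign h f, restrictAssign Finset.sdiff_subset f)
  invFun p x := if hx : x.1 ∈ U then p.1 ⟨x.1, hx⟩
    else p.2 ⟨x.1, Finset.mem_sdiff.mpr ⟨x.2, hx⟩⟩
  left_inv f := by
    funext x
    by_cases hx : x.1 ∈ U <;> simp [restrictAssign, hx]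
  right_inv p := by
    refine Prod.ext (funext fun x => ?_) (funext fun x => ?_)
    · simp [restrictAssign, x.2]
    · simp [restrictAssign, (Finset.mem_sdiff.mp x.2).2]

lemma uniform_restrict_pair {D X : Type*} [DecidableEq D] [Nonempty X] [Fintype X]
    {U S : Finset D} (h : U ⊆ S) :
    (PMF.uniformOfFintype (({x // x ∈ S} → X) × ({x // x ∈ S} → X))).map
        (fun RW => (restrictAssign h RW.1, restrictAssign h RW.2)) =
      PMF.uniformOfFintype (({x // x ∈ U} → X) × ({x // x ∈ U} → X)) := by
  have key : (fun RW : ({x // x ∈ S} → X) × ({x // x ∈ S} → X) =>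
      (restrictAssign h RW.1, restrictAssign h RW.2)) =
      Prod.fst ∘ (((splitEquiv h).prodCongr (splitEquiv h)).trans
        (Equiv.prodProdProdComm _ _ _ _)) := by
    funext RW; rfl
  rw [key, ← PMF.map_comp, uniform_map_equiv, uniform_map_fst]

lemma nonsignal_subset {D A : Type*} [DecidableEq D] {k : ℕ}
    {F : (S : Finset D) → PMF ({x // x ∈ S} → A)} (hns : IsNonSignaling k F)
    {V W : Finset D} (hVW : V ⊆ W) (hW : W.card ≤ k) :
    marginal (F W) hVW = F V := by
  have hV : V.card ≤ k := le_trans (Finset.card_le_card hVW) hW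
  have h := hns W V hW hV
  have h' := congrArg (fun p => marginal p
    (Finset.subset_inter hVW (Finset.Subset.refl V) : V ⊆ W ∩ V)) h
  simp only [marginal_marginal] at h'
  rw [marginal_refl] at h'
  exact h'

def bset {n t : ℕ} (S : Finset (Fin t → Fin n → ZMod 2))
    (RW : ({Q // Q ∈ S} → (Fin t → Fin n → ZMod 2)) ×
      ({Q // Q ∈ S} → (Fin t → Fin n → ZMod 2))) :
    Finset (Fin (t + t) → Fin n → ZMod 2) :=
  Finset.univ.biUnion fun Q : {Q // Q ∈ S} =>
    {Fin.append (RW.1 Q) (RW.2 Q), Fin.append (Q.1 + RW.1 Q) (RW.2 Q)}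

def ans {n t : ℕ} (S : Finset (Fin t → Fin n → ZMod 2))
    (RW : ({Q // Q ∈ S} → (Fin t → Fin n → ZMod 2)) ×
      ({Q // Q ∈ S} → (Fin t → Fin n → ZMod 2)))
    (f : {x // x ∈ bset S RW} → (Fin (t + t) → ZMod 2)) :
    {Q // Q ∈ S} → Fin t → ZMod 2 := fun Q j =>
  f ⟨Fin.append (RW.1 Q) (RW.2 Q),
      Finset.mem_biUnion.mpr ⟨Q, Finset.mem_univ _, Finset.mem_insert_self _ _⟩⟩
    (Fin.castAdd t j)
  + f ⟨Fin.append (Q.1 + RW.1 Q) (RW.2 Q),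
      Finset.mem_biUnion.mpr ⟨Q, Finset.mem_univ _,
        Finset.mem_insert_of_mem (Finset.mem_singleton_self _)⟩⟩
    (Fin.castAdd t j)

lemma selfCorrect_eq {n t : ℕ} (F : NSFam n (t + t)) (S : Finset (Fin t → Fin n → ZMod 2)) :
    selfCorrect F S = (PMF.uniformOfFintype (({Q // Q ∈ S} → (Fin t → Fin n → ZMod 2)) ×
        ({Q // Q ∈ S} → (Fin t → Fin n → ZMod 2)))).bind fun RW =>
      (F (bset S RW)).map (ans S RW) := rfl

lemma bset_card_le {n t k : ℕ} {S : Finset (Fin t → Fin n → ZMod 2)} (hS : S.card ≤ k / 2)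
    (RW : ({Q // Q ∈ S} → (Fin t → Fin n → ZMod 2)) ×
      ({Q // Q ∈ S} → (Fin t → Fin n → ZMod 2))) :
    (bset S RW).card ≤ k := by
  calc (bset S RW).card ≤ ∑ Q : {Q // Q ∈ S},
        ({Fin.append (RW.1 Q) (RW.2 Q), Fin.append (Q.1 + RW.1 Q) (RW.2 Q)} :
          Finset (Fin (t + t) → Fin n → ZMod 2)).card := Finset.card_biUnion_le
    _ ≤ ∑ _Q : {Q // Q ∈ S}, 2 := Finset.sum_le_sum fun Q _ =>
        le_trans (Finset.card_insert_le _ _) (by simp)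
    _ = S.card * 2 := by simp [Finset.sum_const, Fintype.card_coe, mul_comm]
    _ ≤ k / 2 * 2 := by omega
    _ ≤ k := Nat.div_mul_le_self k 2

lemma bset_subset {n t : ℕ} {U S : Finset (Fin t → Fin n → ZMod 2)} (hU : U ⊆ S)
    (RW : ({Q // Q ∈ S} → (Fin t → Fin n → ZMod 2)) ×
      ({Q // Q ∈ S} → (Fin t → Fin n → ZMod 2))) :
    bset U (restrictAssign hU RW.1, restrictAssign hU RW.2) ⊆ bset S RW := by
  intro x hx
  obtain ⟨Q, -, hx⟩ := Finset.mem_biUnion.mp hx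
  exact Finset.mem_biUnion.mpr ⟨⟨Q.1, hU Q.2⟩, Finset.mem_univ _, hx⟩

lemma ans_restrict {n t : ℕ} {U S : Finset (Fin t → Fin n → ZMod 2)} (hU : U ⊆ S)
    (RW : ({Q // Q ∈ S} → (Fin t → Fin n → ZMod 2)) ×
      ({Q // Q ∈ S} → (Fin t → Fin n → ZMod 2))) :
    (restrictAssign hU) ∘ (ans S RW) =
      (ans U (restrictAssign hU RW.1, restrictAssign hU RW.2)) ∘
        (restrictAssign (bset_subset hU RW)) := rfl

set_option maxHeartbeats 2000000 in
lemma selfCorrect_marginal {n t k : ℕ} (F : NSFam n (t + t)) (hns : IsNonSignaling k F)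
    {U S : Finset (Fin t → Fin n → ZMod 2)} (hU : U ⊆ S) (hS : S.card ≤ k / 2) :
    marginal (selfCorrect F S) hU = selfCorrect F U := by
  classical
  rw [selfCorrect_eq, selfCorrect_eq, marginal, PMF.map_bind]
  have step : ∀ RW, PMF.map (restrictAssign hU) ((F (bset S RW)).map (ans S RW)) =
      (F (bset U (restrictAssign hU RW.1, restrictAssign hU RW.2))).map
        (ans U (restrictAssign hU RW.1, restrictAssign hU RW.2)) := by
    intro RW
    rw [PMF.map_comp, ans_restrict hU RW, ← PMF.map_comp]
    congr 1
    exact nonsignal_subset hns (bset_subset hU RW) (bset_card_le hS RW)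
  refine Eq.trans (congrArg (PMF.bind _) (funext step)) ?_
  have comp_eq : (fun RW : ({Q // Q ∈ S} → (Fin t → Fin n → ZMod 2)) ×
        ({Q // Q ∈ S} → (Fin t → Fin n → ZMod 2)) =>
      (F (bset U (restrictAssign hU RW.1, restrictAssign hU RW.2))).map
        (ans U (restrictAssign hU RW.1, restrictAssign hU RW.2))) =
      ((fun RW' => (F (bset U RW')).map (ans U RW')) ∘
        (fun RW => (restrictAssign hU RW.1, restrictAssign hU RW.2))) := rfl
  rw [comp_eq, ← PMF.bind_map, uniform_restrict_pair hU]

/-- the self-correction of a `2t`-repeated `k`-non-signaling function is a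
well-defined `t`-repeated `⌊k/2⌋`-non-signaling function: for any two query sets of size
at most `⌊k/2⌋`, the marginals of the self-correction on their intersection agree. -/
theorem selfCorrect_nonsignaling {n t k : ℕ} (F : NSFam n (t + t))
    (hns : IsNonSignaling k F) :
    IsNonSignaling (k / 2) (selfCorrect F) := by
  intro S T hS hT
  rw [selfCorrect_marginal F hns Finset.inter_subset_left hS,
    selfCorrect_marginal F hns Finset.inter_subset_right hT]
end
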